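/- arXiv:1807.06266 — 5 statements merged into one kernel-verified Lean document; each statement's English description precedes it below -/
import Mathlib

section
/- Two-stage equivalence, part (a): Under the stated assumptions, the optimal value of the generalized moment problem equals the optimal value of the two-stage stochastic program, i.e. ρ₁₂ = ρ. -/
open MeasureTheory MvPolynomial

open MeasureTheory Filter Topology
set_option maxHeartbeats 1000000

section AuxSelection

variable {α β : Type*}

/-- Projection of a closed set with range in a compact set is closed. -/
lemma aux_isClosed_proj [TopologicalSpace α] [TopologicalSpace β]
    {Q : Set β} (hQc : IsCompact Q) {C : Set (α × β)} (hC : IsClosed C)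
    (hCQ : ∀ z ∈ C, z.2 ∈ Q) : IsClosed {y | ∃ x, (y, x) ∈ C} := by
  haveI : CompactSpace Q := isCompact_iff_compactSpace.mp hQc
  have hcont : Continuous fun z : Q × α => (z.2, (z.1 : β)) :=
    continuous_snd.prodMk (continuous_subtype_val.comp continuous_fst)
  have hS : IsClosed {z : Q × α | (z.2, (z.1 : β)) ∈ C} := hC.preimage hcont
  have himg : {y | ∃ x, (y, x) ∈ C} = Prod.snd '' {z : Q × α | (z.2, (z.1 : β)) ∈ C} := by
    ext y
    constructor
    · rintro ⟨x, hx⟩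
      exact ⟨(⟨x, hCQ _ hx⟩, y), hx, rfl⟩
    · rintro ⟨⟨x, y'⟩, hz, rfl⟩
      exact ⟨x, hz⟩
  rw [himg]
  exact isClosedMap_snd_of_compactSpace _ hS

open Classical in
/-- A classical `Nat.find`-style choice function. -/
noncomputable def auxFind (P : ℕ → α → Prop) (y : α) : ℕ :=
  if h : ∃ k, P k y then Nat.find h else 0

lemma auxFind_spec {P : ℕ → α → Prop} {y : α} (h : ∃ k, P k y) : P (auxFind P y) y := by
  classical
  rw [auxFind, dif_pos h]
  exact Nat.find_spec h

lemma measurable_auxFind [MeasurableSpace α] (P : ℕ → α → Prop)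
    (hP : ∀ k, MeasurableSet {y | P k y}) : Measurable (auxFind P) := by
  classical
  apply measurable_to_countable'
  intro k
  have hset : auxFind P ⁻¹' {k} =
      ({y | P k y} ∩ ⋂ j, ⋂ _ : j < k, {y | P j y}ᶜ) ∪
        (if k = 0 then ⋂ j, {y | P j y}ᶜ else ∅) := by
    ext y
    by_cases h : ∃ j, P j y
    · simp only [Set.mem_preimage, Set.mem_singleton_iff, auxFind, dif_pos h]
      rw [Nat.find_eq_iff]
      constructor
      · rintro ⟨h1, h2⟩
        exact Or.inl ⟨h1, by simpa using h2⟩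
      · rintro (⟨h1, h2⟩ | hmem)
        · exact ⟨h1, by simpa using h2⟩
        · obtain ⟨j, hj⟩ := h
          split_ifs at hmem with hk
          · exact absurd hj (by simpa using (Set.mem_iInter.mp hmem j))
          · exact absurd hmem (Set.notMem_empty y)
    · simp only [Set.mem_preimage, Set.mem_singleton_iff, auxFind, dif_neg h]
      push_neg at h
      constructor
      · rintro rfl
        refine Or.inr ?_
        simp only [if_pos rfl]
        exact Set.mem_iInter.mpr fun j => h j
      · rintro (⟨h1, _⟩ | hmem)
        · exact absurd h1 (h k)
        · split_ifs at hmem with hk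
          · omega
          · exact absurd hmem (Set.notMem_empty y)
  rw [hset]
  refine MeasurableSet.union ?_ ?_
  · exact (hP k).inter (MeasurableSet.iInter fun j => MeasurableSet.iInter fun _ => (hP j).compl)
  · split_ifs
    · exact MeasurableSet.iInter fun j => (hP j).compl
    · exact MeasurableSet.empty

/-- Composing a countably-valued measurable function with a measurable family. -/
lemma aux_measurable_bind {ι : Type*} [MeasurableSpace α] [MeasurableSpace β]
    [Countable ι] [MeasurableSpace ι] [MeasurableSingletonClass ι]
    {F : α → ι} (hF : Measurable F) {G : ι → α → β} (hG : ∀ j, Measurable (G j)) :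
    Measurable (fun y => G (F y) y) := by
  intro s hs
  have hset : (fun y => G (F y) y) ⁻¹' s = ⋃ j, (F ⁻¹' {j}) ∩ ((G j) ⁻¹' s) := by
    ext y
    simp only [Set.mem_preimage, Set.mem_iUnion, Set.mem_inter_iff, Set.mem_singleton_iff]
    exact ⟨fun h => ⟨F y, rfl, h⟩, by rintro ⟨j, rfl, h⟩; exact h⟩
  rw [hset]
  exact MeasurableSet.iUnion fun j => (hF (measurableSet_singleton j)).inter (hG j hs)

/-- Measurable selection for a closed-graph multifunction with values in a fixed compact set. -/
lemma exists_measurable_selection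
    [TopologicalSpace α] [MeasurableSpace α] [OpensMeasurableSpace α]
    [MetricSpace β] [CompleteSpace β] [TopologicalSpace.SeparableSpace β] [Nonempty β]
    [MeasurableSpace β] [BorelSpace β]
    {Q : Set β} (hQc : IsCompact Q)
    {C : Set (α × β)} (hC : IsClosed C) (hCQ : ∀ z ∈ C, z.2 ∈ Q)
    {D : Set α} (hD : MeasurableSet D) (hne : ∀ y ∈ D, ∃ x, (y, x) ∈ C) :
    ∃ σ : α → β, Measurable σ ∧ ∀ y ∈ D, (y, σ y) ∈ C := by
  classical
  set a : ℕ → β := TopologicalSpace.denseSeq β with ha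
  have hdense : ∀ (x : β) (δ : ℝ), 0 < δ → ∃ k, dist (a k) x ≤ δ := by
    intro x δ hδ
    obtain ⟨k, hk⟩ := Metric.denseRange_iff.mp (TopologicalSpace.denseRange_denseSeq β) x δ hδ
    exact ⟨k, by rw [dist_comm]; exact hk.le⟩
  set r : ℕ → ℝ := fun m => (1 / 2 : ℝ) ^ m with hr
  have hrpos : ∀ m, 0 < r m := fun m => by positivity
  set E : β → ℝ → Set α := fun b c => {y | ∃ x, (y, x) ∈ C ∧ dist x b ≤ c} with hE
  have hEclosed : ∀ b c, IsClosed (E b c) := by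
    intro b c
    have h1 : E b c = {y | ∃ x, (y, x) ∈ C ∩ {z : α × β | dist z.2 b ≤ c}} := by
      ext y; simp [hE, Set.mem_inter_iff]
    rw [h1]
    exact aux_isClosed_proj hQc
      (hC.inter (isClosed_le (continuous_snd.dist continuous_const) continuous_const))
      (fun z hz => hCQ z hz.1)
  have hEmeas : ∀ b c, MeasurableSet (E b c) := fun b c => (hEclosed b c).measurableSet
  set P : ℕ → ℕ → ℕ → α → Prop :=
    fun m j k y => y ∈ E (a k) (r (m + 1)) ∧ dist (a k) (a j) ≤ r m + r (m + 1) with hP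
  set F : ℕ → α → ℕ := fun n => n.rec (auxFind (fun k y => y ∈ E (a k) (r 0)))
      (fun m Fm y => if y ∈ D then auxFind (P m (Fm y)) y else 0) with hF
  have hFs : ∀ m y, F (m + 1) y = if y ∈ D then auxFind (P m (F m y)) y else 0 :=
    fun _ _ => rfl
  have hFmeas : ∀ m, Measurable (F m) := by
    intro m
    induction m with
    | zero => exact measurable_auxFind _ (fun k => hEmeas _ _)
    | succ m ih =>
      have hstep : ∀ j, Measurable (fun y => auxFind (P m j) y) := by
        intro j
        refine measurable_auxFind _ (fun k => ?_)
        by_cases hd : dist (a k) (a j) ≤ r m + r (m + 1)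
        · have : {y | P m j k y} = E (a k) (r (m + 1)) := by ext y; simp [hP, hd]
          rw [this]; exact hEmeas _ _
        · have : {y | P m j k y} = ∅ := by ext y; simp [hP, hd]
          rw [this]; exact MeasurableSet.empty
      exact Measurable.ite hD (aux_measurable_bind ih hstep) measurable_const
  have hInv : ∀ m, ∀ y ∈ D, ∃ x, (y, x) ∈ C ∧ dist x (a (F m y)) ≤ r m := by
    intro m
    induction m with
    | zero =>
      intro y hy
      obtain ⟨x, hx⟩ := hne y hy
      obtain ⟨k, hk⟩ := hdense x (r 0) (hrpos 0)
      have hex : ∃ k, y ∈ E (a k) (r 0) := ⟨k, ⟨x, hx, by rwa [dist_comm] at hk⟩⟩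
      exact auxFind_spec hex
    | succ m ih =>
      intro y hy
      obtain ⟨x, hx, hxd⟩ := ih y hy
      obtain ⟨k, hk⟩ := hdense x (r (m + 1)) (hrpos _)
      have hex : ∃ k, P m (F m y) k y := by
        refine ⟨k, ⟨⟨x, hx, by rwa [dist_comm] at hk⟩, ?_⟩⟩
        calc dist (a k) (a (F m y)) ≤ dist (a k) x + dist x (a (F m y)) := dist_triangle _ _ _
          _ ≤ r (m + 1) + r m := add_le_add hk hxd
          _ = r m + r (m + 1) := add_comm _ _
      have hspec := auxFind_spec hex
      rw [show F (m + 1) y = auxFind (P m (F m y)) y from by rw [hFs, if_pos hy]]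
      exact hspec.1
  have hsucc : ∀ m, ∀ y ∈ D, dist (a (F (m + 1) y)) (a (F m y)) ≤ r m + r (m + 1) := by
    intro m y hy
    obtain ⟨x, hx, hxd⟩ := hInv m y hy
    obtain ⟨k, hk⟩ := hdense x (r (m + 1)) (hrpos _)
    have hex : ∃ k, P m (F m y) k y := by
      refine ⟨k, ⟨⟨x, hx, by rwa [dist_comm] at hk⟩, ?_⟩⟩
      calc dist (a k) (a (F m y)) ≤ dist (a k) x + dist x (a (F m y)) := dist_triangle _ _ _
        _ ≤ r (m + 1) + r m := add_le_add hk hxd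
        _ = r m + r (m + 1) := add_comm _ _
    have hspec := auxFind_spec hex
    rw [show F (m + 1) y = auxFind (P m (F m y)) y from by rw [hFs, if_pos hy]]
    exact hspec.2
  have hconv : ∀ y, ∃ L, Tendsto (fun m => a (F m y)) atTop (𝓝 L) := by
    intro y
    by_cases hy : y ∈ D
    · refine cauchySeq_tendsto_of_complete (cauchySeq_of_le_geometric (1 / 2) 2 (by norm_num) ?_)
      intro n
      rw [dist_comm]
      calc dist (a (F (n + 1) y)) (a (F n y)) ≤ r n + r (n + 1) := hsucc n y hy
        _ ≤ 2 * (1 / 2) ^ n := by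
          have h1 : (1 / 2 : ℝ) ^ (n + 1) ≤ (1 / 2) ^ n :=
            pow_le_pow_of_le_one (by norm_num) (by norm_num) (by omega)
          simp only [hr]
          linarith
    · refine ⟨a 0, tendsto_atTop_of_eventually_const (i₀ := 1) ?_⟩
      intro m hm
      match m, hm with
      | m + 1, _ => rw [hFs, if_neg hy]
  choose σ hσ using hconv
  have hσmeas : Measurable σ := by
    have hgm : ∀ m, Measurable (fun y => a (F m y)) :=
      fun m => aux_measurable_bind (hFmeas m) (G := fun j _ => a j) (fun j => measurable_const)
    refine measurable_of_tendsto_metrizable' (f := fun m y => a (F m y)) atTop hgm ?_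
    rw [tendsto_pi_nhds]
    exact hσ
  refine ⟨σ, hσmeas, fun y hy => ?_⟩
  have hx := fun m => hInv m y hy
  choose x hxC hxd using hx
  have hxa : Tendsto x atTop (𝓝 (σ y)) := by
    rw [tendsto_iff_dist_tendsto_zero]
    refine squeeze_zero (fun m => dist_nonneg) (g := fun m => r m + dist (a (F m y)) (σ y))
      (fun m => ?_) ?_
    · calc dist (x m) (σ y) ≤ dist (x m) (a (F m y)) + dist (a (F m y)) (σ y) :=
        dist_triangle _ _ _
        _ ≤ r m + dist (a (F m y)) (σ y) := add_le_add (hxd m) le_rfl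
    · have h1 : Tendsto r atTop (𝓝 0) :=
        tendsto_pow_atTop_nhds_zero_of_lt_one (by norm_num) (by norm_num)
      have h2 : Tendsto (fun m => dist (a (F m y)) (σ y)) atTop (𝓝 0) :=
        tendsto_iff_dist_tendsto_zero.mp (hσ y)
      simpa using h1.add h2
  have htup : Tendsto (fun m => (y, x m)) atTop (𝓝 (y, σ y)) :=
    tendsto_const_nhds.prodMk_nhds hxa
  exact hC.mem_of_tendsto htup (Eventually.of_forall fun m => hxC m)

end AuxSelection

section AuxMisc

lemma aux_ae_mem {α : Type*} [MeasurableSpace α] {μ : MeasureTheory.Measure α} {s : Set α}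
    (h : μ sᶜ = 0) : ∀ᵐ x ∂μ, x ∈ s := by
  rw [MeasureTheory.ae_iff]
  simpa [Set.compl_def] using h

lemma aux_abs_le {lo hi x : ℝ} (h1 : lo ≤ x) (h2 : x ≤ hi) : ‖x‖ ≤ max |lo| |hi| := by
  rw [Real.norm_eq_abs, abs_le]
  constructor
  · calc -(max |lo| |hi|) ≤ -|lo| := neg_le_neg (le_max_left _ _)
      _ ≤ lo := neg_abs_le lo
      _ ≤ x := h1
  · calc x ≤ hi := h2
      _ ≤ |hi| := le_abs_self hi
      _ ≤ max |lo| |hi| := le_max_right _ _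

end AuxMisc


/-- **Theorem 1(a).** Under compactness of `K1`, `K2`, `Y`, nonemptiness of
`K1` and `Y`, second-stage feasibility for every `x1 ∈ K1`, `y ∈ Y`, and measurability of
the second-stage value function `v`, the optimal value `ρ₁₂` of the generalized moment
problem equals the optimal value `ρ` of the two-stage stochastic program. -/
theorem gmp_equals_two_stage
    (n1 n2 p Nq Nh Ng NgY : ℕ) (hn1 : 0 < n1) (hn2 : 0 < n2) (hp : 0 < p)
    (f1 : MvPolynomial (Fin n1) ℝ) (f2 : MvPolynomial (Fin n1 ⊕ Fin n2) ℝ)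
    (q : Fin Nq → MvPolynomial (Fin n1) ℝ)
    (h : Fin Nh → MvPolynomial (Fin n1 ⊕ Fin n2 ⊕ Fin p) ℝ)
    (g : Fin Ng → MvPolynomial (Fin n1 ⊕ Fin n2 ⊕ Fin p) ℝ)
    (gY : Fin NgY → MvPolynomial (Fin p) ℝ)
    (K1 : Set (Fin n1 → ℝ)) (Y : Set (Fin p → ℝ))
    (K2 : Set ((Fin n1 → ℝ) × (Fin n2 → ℝ) × (Fin p → ℝ)))
    (hK1 : K1 = {x1 | ∀ l, 0 ≤ eval x1 (q l)})
    (hY : Y = {y | ∀ j, 0 ≤ eval y (gY j)})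
    (hK2 : K2 = {t | t.1 ∈ K1 ∧ t.2.2 ∈ Y ∧
      (∀ i, eval (Sum.elim t.1 (Sum.elim t.2.1 t.2.2)) (h i) = 0) ∧
      (∀ j, 0 ≤ eval (Sum.elim t.1 (Sum.elim t.2.1 t.2.2)) (g j))})
    (φ : Measure (Fin p → ℝ)) (hφ : IsProbabilityMeasure φ) (hφY : φ Yᶜ = 0)
    (hK1c : IsCompact K1) (hK2c : IsCompact K2) (hYc : IsCompact Y)
    (hK1ne : K1.Nonempty) (hYne : Y.Nonempty)
    (hfeas : ∀ x1 ∈ K1, ∀ y ∈ Y, ∃ x2, (x1, x2, y) ∈ K2)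
    (v : (Fin n1 → ℝ) → (Fin p → ℝ) → ℝ)
    (hv : ∀ x1 y, v x1 y =
      sInf {c | ∃ x2, (x1, x2, y) ∈ K2 ∧ c = eval (Sum.elim x1 x2) f2})
    (hvmeas : Measurable fun t : (Fin n1 → ℝ) × (Fin p → ℝ) => v t.1 t.2)
    (ρ ρ12 : ℝ)
    (hρ : ρ = sInf {c | ∃ x1 ∈ K1, c = eval x1 f1 + ∫ y in Y, v x1 y ∂φ})
    (hρ12 : ρ12 = sInf {c | ∃ (μ1 : Measure (Fin n1 → ℝ))
        (μ2 : Measure ((Fin n1 → ℝ) × (Fin n2 → ℝ) × (Fin p → ℝ))),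
      IsProbabilityMeasure μ1 ∧ IsFiniteMeasure μ2 ∧
      μ1 K1ᶜ = 0 ∧ μ2 K2ᶜ = 0 ∧
      Measure.map (fun t => (t.1, t.2.2)) μ2 = μ1.prod φ ∧
      c = (∫ x1, eval x1 f1 ∂μ1) + ∫ t, eval (Sum.elim t.1 t.2.1) f2 ∂μ2}) :
    ρ12 = ρ := by
  classical
  -- continuity facts
  have hcont1 : Continuous fun x1 : Fin n1 → ℝ => eval x1 f1 := MvPolynomial.continuous_eval f1
  have hcont2' : Continuous
      fun t : (Fin n1 → ℝ) × (Fin n2 → ℝ) × (Fin p → ℝ) => eval (Sum.elim t.1 t.2.1) f2 := by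
    have hElim : Continuous
        fun t : (Fin n1 → ℝ) × (Fin n2 → ℝ) × (Fin p → ℝ) => Sum.elim t.1 t.2.1 := by
      apply continuous_pi
      intro i
      cases i with
      | inl i => exact (continuous_apply i).comp continuous_fst
      | inr i => exact (continuous_apply i).comp (continuous_fst.comp continuous_snd)
    exact (MvPolynomial.continuous_eval f2).comp hElim
  -- closedness and measurability of the constraint sets
  have hK1m : MeasurableSet K1 := hK1c.isClosed.measurableSet
  have hK2m : MeasurableSet K2 := hK2c.isClosed.measurableSet
  have hYm : MeasurableSet Y := hYc.isClosed.measurableSet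
  -- nonemptiness of K2
  obtain ⟨x10, hx10⟩ := hK1ne
  obtain ⟨y0, hy0⟩ := hYne
  obtain ⟨x20, ht0⟩ := hfeas x10 hx10 y0 hy0
  have hK2ne : K2.Nonempty := ⟨_, ht0⟩
  have hK2sub : ∀ t ∈ K2, t.1 ∈ K1 ∧ t.2.2 ∈ Y := by
    intro t ht
    rw [hK2] at ht
    exact ⟨ht.1, ht.2.1⟩
  -- bounds for f2 on K2
  obtain ⟨tmin, htmin, hmin⟩ := hK2c.exists_isMinOn hK2ne hcont2'.continuousOn
  obtain ⟨tmax, htmax, hmax⟩ := hK2c.exists_isMaxOn hK2ne hcont2'.continuousOn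
  set m2 : ℝ := eval (Sum.elim tmin.1 tmin.2.1) f2 with hm2
  set M2 : ℝ := eval (Sum.elim tmax.1 tmax.2.1) f2 with hM2
  have hb2 : ∀ a b c, (a, b, c) ∈ K2 →
      m2 ≤ eval (Sum.elim a b) f2 ∧ eval (Sum.elim a b) f2 ≤ M2 :=
    fun a b c hm => ⟨isMinOn_iff.mp hmin (a, b, c) hm, isMaxOn_iff.mp hmax (a, b, c) hm⟩
  set C2 : ℝ := max |m2| |M2| with hC2
  have hb2n : ∀ a b c, (a, b, c) ∈ K2 → ‖eval (Sum.elim a b) f2‖ ≤ C2 :=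
    fun a b c hm => aux_abs_le (hb2 a b c hm).1 (hb2 a b c hm).2
  -- bounds for f1 on K1
  obtain ⟨s1, hs1, hmin1⟩ := hK1c.exists_isMinOn ⟨x10, hx10⟩ hcont1.continuousOn
  obtain ⟨s2, hs2, hmax1⟩ := hK1c.exists_isMaxOn ⟨x10, hx10⟩ hcont1.continuousOn
  set m1 : ℝ := eval s1 f1 with hm1
  set C1 : ℝ := max |m1| |eval s2 f1| with hC1
  have hb1n : ∀ x1 ∈ K1, ‖eval x1 f1‖ ≤ C1 :=
    fun x1 hx1 => aux_abs_le (isMinOn_iff.mp hmin1 x1 hx1) (isMaxOn_iff.mp hmax1 x1 hx1)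
  -- properties of v
  have hbddS : ∀ x1 y, BddBelow {c | ∃ x2, (x1, x2, y) ∈ K2 ∧ c = eval (Sum.elim x1 x2) f2} := by
    intro x1 y
    refine ⟨m2, ?_⟩
    rintro c ⟨x2, hmem, rfl⟩
    exact (hb2 _ _ _ hmem).1
  have hSne : ∀ x1 ∈ K1, ∀ y ∈ Y,
      Set.Nonempty {c | ∃ x2, (x1, x2, y) ∈ K2 ∧ c = eval (Sum.elim x1 x2) f2} := by
    intro x1 hx1 y hy
    obtain ⟨x2, hmem⟩ := hfeas x1 hx1 y hy
    exact ⟨_, x2, hmem, rfl⟩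
  have hvle : ∀ {x1 x2 y}, (x1, x2, y) ∈ K2 → v x1 y ≤ eval (Sum.elim x1 x2) f2 := by
    intro x1 x2 y hmem
    rw [hv]
    exact csInf_le (hbddS x1 y) ⟨x2, hmem, rfl⟩
  have hvlo : ∀ x1 ∈ K1, ∀ y ∈ Y, m2 ≤ v x1 y := by
    intro x1 hx1 y hy
    rw [hv]
    refine le_csInf (hSne x1 hx1 y hy) ?_
    rintro c ⟨x2, hmem, rfl⟩
    exact (hb2 _ _ _ hmem).1
  have hvhi : ∀ x1 ∈ K1, ∀ y ∈ Y, v x1 y ≤ M2 := by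
    intro x1 hx1 y hy
    obtain ⟨x2, hmem⟩ := hfeas x1 hx1 y hy
    exact (hvle hmem).trans (hb2 _ _ _ hmem).2
  have hvabs : ∀ x1 ∈ K1, ∀ y ∈ Y, ‖v x1 y‖ ≤ C2 :=
    fun x1 hx1 y hy => aux_abs_le (hvlo x1 hx1 y hy) (hvhi x1 hx1 y hy)
  -- measure facts
  have haeY : ∀ᵐ y ∂φ, y ∈ Y := aux_ae_mem hφY
  have hrestr : φ.restrict Y = φ := Measure.restrict_eq_self_of_ae_mem haeY
  rw [hrestr] at hρ
  have hπm : Measurable fun t : (Fin n1 → ℝ) × (Fin n2 → ℝ) × (Fin p → ℝ) => (t.1, t.2.2) :=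
    measurable_fst.prodMk (measurable_snd.comp measurable_snd)
  have hm_v1 : ∀ x1, Measurable (v x1) :=
    fun x1 => hvmeas.comp (measurable_const.prodMk measurable_id)
  have hIv : ∀ x1 ∈ K1, Integrable (v x1) φ := by
    intro x1 hx1
    refine Integrable.mono' (integrable_const C2) (hm_v1 x1).aestronglyMeasurable ?_
    filter_upwards [haeY] with y hy
    exact hvabs x1 hx1 y hy
  -- the first-stage feasible set is bounded below
  have hSρbdd : BddBelow {c | ∃ x1 ∈ K1, c = eval x1 f1 + ∫ y, v x1 y ∂φ} := by
    refine ⟨m1 + m2, ?_⟩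
    rintro c ⟨x1, hx1, rfl⟩
    have h1 : ∫ y, (m2 : ℝ) ∂φ ≤ ∫ y, v x1 y ∂φ := by
      refine integral_mono_ae (integrable_const _) (hIv x1 hx1) ?_
      filter_upwards [haeY] with y hy
      exact hvlo x1 hx1 y hy
    have h2 : ∫ y, (m2 : ℝ) ∂φ = m2 := by simp [integral_const, measure_univ]
    have h3 : m1 ≤ eval x1 f1 := isMinOn_iff.mp hmin1 x1 hx1
    rw [h2] at h1
    linarith
  -- Direction 1 : every feasible value of the GMP dominates ρ
  have hdir1 : ∀ c : ℝ, (∃ (μ1 : Measure (Fin n1 → ℝ))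
        (μ2 : Measure ((Fin n1 → ℝ) × (Fin n2 → ℝ) × (Fin p → ℝ))),
      IsProbabilityMeasure μ1 ∧ IsFiniteMeasure μ2 ∧
      μ1 K1ᶜ = 0 ∧ μ2 K2ᶜ = 0 ∧
      Measure.map (fun t => (t.1, t.2.2)) μ2 = μ1.prod φ ∧
      c = (∫ x1, eval x1 f1 ∂μ1) + ∫ t, eval (Sum.elim t.1 t.2.1) f2 ∂μ2) → ρ ≤ c := by
    rintro c ⟨μ1, μ2, hμ1p, hμ2f, hμ1K, hμ2K, hmap, rfl⟩
    have haeK1 : ∀ᵐ x1 ∂μ1, x1 ∈ K1 := aux_ae_mem hμ1K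
    have haeK2 : ∀ᵐ t ∂μ2, t ∈ K2 := aux_ae_mem hμ2K
    haveI : IsProbabilityMeasure μ2 := by
      constructor
      calc μ2 Set.univ = Measure.map (fun t : (Fin n1 → ℝ) × (Fin n2 → ℝ) × (Fin p → ℝ) =>
            (t.1, t.2.2)) μ2 Set.univ := by
            rw [Measure.map_apply hπm MeasurableSet.univ, Set.preimage_univ]
        _ = (μ1.prod φ) Set.univ := by rw [hmap]
        _ = 1 := measure_univ
    have hIF1 : Integrable (fun x1 => eval x1 f1) μ1 := by
      refine Integrable.mono' (integrable_const C1) hcont1.aestronglyMeasurable ?_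
      filter_upwards [haeK1] with x1 hx1
      exact hb1n x1 hx1
    have hIF2 : Integrable (fun t => eval (Sum.elim t.1 t.2.1) f2) μ2 := by
      refine Integrable.mono' (integrable_const C2) hcont2'.aestronglyMeasurable ?_
      filter_upwards [haeK2] with t ht
      exact hb2n t.1 t.2.1 t.2.2 ht
    have hIvt : Integrable (fun t : (Fin n1 → ℝ) × (Fin n2 → ℝ) × (Fin p → ℝ) =>
        v t.1 t.2.2) μ2 := by
      refine Integrable.mono' (integrable_const C2) ((hvmeas.comp hπm).aestronglyMeasurable) ?_
      filter_upwards [haeK2] with t ht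
      exact hvabs t.1 (hK2sub t ht).1 t.2.2 (hK2sub t ht).2
    have hA : ∫ t, v t.1 t.2.2 ∂μ2 ≤ ∫ t, eval (Sum.elim t.1 t.2.1) f2 ∂μ2 := by
      refine integral_mono_ae hIvt hIF2 ?_
      filter_upwards [haeK2] with t ht
      exact hvle ht
    have hB : ∫ z : (Fin n1 → ℝ) × (Fin p → ℝ), v z.1 z.2 ∂(μ1.prod φ)
        = ∫ t, v t.1 t.2.2 ∂μ2 := by
      rw [← hmap, integral_map hπm.aemeasurable hvmeas.aestronglyMeasurable]
    have haeprod : ∀ᵐ z ∂(μ1.prod φ), z.1 ∈ K1 ∧ z.2 ∈ Y := by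
      have h1 : (μ1.prod φ) ((K1 ×ˢ Y)ᶜ) = 0 := by
        refine measure_mono_null (t := (K1ᶜ ×ˢ (Set.univ : Set (Fin p → ℝ))) ∪
          ((Set.univ : Set (Fin n1 → ℝ)) ×ˢ Yᶜ)) ?_ ?_
        · intro z hz
          by_cases h1 : z.1 ∈ K1
          · exact Or.inr ⟨Set.mem_univ _, fun h2 => hz ⟨h1, h2⟩⟩
          · exact Or.inl ⟨h1, Set.mem_univ _⟩
        · refine measure_union_null ?_ ?_
          · rw [Measure.prod_prod, hμ1K, zero_mul]
          · rw [Measure.prod_prod, hφY, mul_zero]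
      have h2 := aux_ae_mem (s := K1 ×ˢ Y) h1
      filter_upwards [h2] with z hz
      exact ⟨hz.1, hz.2⟩
    have hIvp : Integrable (fun z : (Fin n1 → ℝ) × (Fin p → ℝ) => v z.1 z.2) (μ1.prod φ) := by
      refine Integrable.mono' (integrable_const C2) hvmeas.aestronglyMeasurable ?_
      filter_upwards [haeprod] with z hz
      exact hvabs z.1 hz.1 z.2 hz.2
    have hinnerSM : StronglyMeasurable fun x1 => ∫ y, v x1 y ∂φ :=
      hvmeas.stronglyMeasurable.integral_prod_right'
    have hIinner : Integrable (fun x1 => ∫ y, v x1 y ∂φ) μ1 := by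
      refine Integrable.mono' (integrable_const C2) hinnerSM.aestronglyMeasurable ?_
      filter_upwards [haeK1] with x1 hx1
      have hb : ‖∫ y, v x1 y ∂φ‖ ≤ C2 * (φ Set.univ).toReal := by
        refine norm_integral_le_of_norm_le_const ?_
        filter_upwards [haeY] with y hy
        exact hvabs x1 hx1 y hy
      simpa [measure_univ] using hb
    have hD : ρ ≤ ∫ x1, (eval x1 f1 + ∫ y, v x1 y ∂φ) ∂μ1 := by
      have h0 : ∫ _x1, (ρ : ℝ) ∂μ1 = ρ := by simp [integral_const, measure_univ]
      rw [← h0]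
      refine integral_mono_ae (integrable_const ρ) (hIF1.add hIinner) ?_
      filter_upwards [haeK1] with x1 hx1
      rw [hρ]
      exact csInf_le hSρbdd ⟨x1, hx1, rfl⟩
    calc ρ ≤ ∫ x1, (eval x1 f1 + ∫ y, v x1 y ∂φ) ∂μ1 := hD
      _ = (∫ x1, eval x1 f1 ∂μ1) + ∫ x1, (∫ y, v x1 y ∂φ) ∂μ1 := integral_add hIF1 hIinner
      _ = (∫ x1, eval x1 f1 ∂μ1) + ∫ z : (Fin n1 → ℝ) × (Fin p → ℝ), v z.1 z.2 ∂(μ1.prod φ) := by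
          rw [integral_prod _ hIvp]
      _ = (∫ x1, eval x1 f1 ∂μ1) + ∫ t, v t.1 t.2.2 ∂μ2 := by rw [hB]
      _ ≤ (∫ x1, eval x1 f1 ∂μ1) + ∫ t, eval (Sum.elim t.1 t.2.1) f2 ∂μ2 := by linarith
  -- Direction 2 : for every x1 ∈ K1 and ε > 0 there is a feasible GMP value within ε
  have hdir2 : ∀ x1 ∈ K1, ∀ ε : ℝ, 0 < ε → ∃ c : ℝ,
      (∃ (μ1 : Measure (Fin n1 → ℝ))
        (μ2 : Measure ((Fin n1 → ℝ) × (Fin n2 → ℝ) × (Fin p → ℝ))),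
      IsProbabilityMeasure μ1 ∧ IsFiniteMeasure μ2 ∧
      μ1 K1ᶜ = 0 ∧ μ2 K2ᶜ = 0 ∧
      Measure.map (fun t => (t.1, t.2.2)) μ2 = μ1.prod φ ∧
      c = (∫ x1, eval x1 f1 ∂μ1) + ∫ t, eval (Sum.elim t.1 t.2.1) f2 ∂μ2) ∧
      c ≤ eval x1 f1 + (∫ y, v x1 y ∂φ) + ε := by
    intro x1 hx1 ε hε
    have hmmeas : Measurable (v x1) := hm_v1 x1
    set J : (Fin p → ℝ) → ℤ := fun y => ⌊v x1 y / ε⌋ with hJ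
    have hJmeas : Measurable J := (hmmeas.div_const ε).floor
    set Q : Set (Fin n2 → ℝ) := (fun t : (Fin n1 → ℝ) × (Fin n2 → ℝ) × (Fin p → ℝ) => t.2.1) '' K2
      with hQ
    have hQc : IsCompact Q := hK2c.image (continuous_fst.comp continuous_snd)
    have hsel : ∀ j : ℤ, ∃ σj : (Fin p → ℝ) → (Fin n2 → ℝ), Measurable σj ∧
        ∀ y ∈ Y ∩ {y | J y = j}, (x1, σj y, y) ∈ K2 ∧
          eval (Sum.elim x1 (σj y)) f2 ≤ (j : ℝ) * ε + ε := by
      intro j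
      set Cj : Set ((Fin p → ℝ) × (Fin n2 → ℝ)) :=
        {z | (x1, z.2, z.1) ∈ K2 ∧ eval (Sum.elim x1 z.2) f2 ≤ (j : ℝ) * ε + ε} with hCj
      have hCjcl : IsClosed Cj := by
        refine IsClosed.inter ?_ ?_
        · exact hK2c.isClosed.preimage
            (continuous_const.prodMk (continuous_snd.prodMk continuous_fst))
        · have hElim : Continuous fun z : (Fin p → ℝ) × (Fin n2 → ℝ) => Sum.elim x1 z.2 := by
            apply continuous_pi
            intro i
            cases i with
            | inl i => exact continuous_const
            | inr i => exact (continuous_apply i).comp continuous_snd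
          have hcontf : Continuous fun z : (Fin p → ℝ) × (Fin n2 → ℝ) =>
              eval (Sum.elim x1 z.2) f2 := (MvPolynomial.continuous_eval f2).comp hElim
          exact isClosed_le hcontf continuous_const
      have hCjQ : ∀ z ∈ Cj, z.2 ∈ Q := fun z hz => ⟨(x1, z.2, z.1), hz.1, rfl⟩
      have hDm : MeasurableSet (Y ∩ {y | J y = j}) :=
        hYm.inter (hJmeas (measurableSet_singleton j))
      have hnej : ∀ y ∈ Y ∩ {y | J y = j}, ∃ x2, (y, x2) ∈ Cj := by
        rintro y ⟨hyY, hyJ⟩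
        have hfl : (⌊v x1 y / ε⌋ : ℤ) = j := hyJ
        have h1 : v x1 y < ((j : ℝ) + 1) * ε := by
          have h2 := Int.lt_floor_add_one (v x1 y / ε)
          rw [hfl] at h2
          exact (div_lt_iff₀ hε).mp h2
        have hSne' := hSne x1 hx1 y hyY
        rw [hv] at h1
        obtain ⟨cc, ⟨x2, hmem, rfl⟩, hlt⟩ := exists_lt_of_csInf_lt hSne' h1
        refine ⟨x2, hmem, ?_⟩
        have hr : ((j : ℝ) + 1) * ε = (j : ℝ) * ε + ε := by ring
        linarith
      obtain ⟨σj, hσjm, hσjC⟩ := exists_measurable_selection hQc hCjcl hCjQ hDm hnej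
      exact ⟨σj, hσjm, fun y hy => ⟨(hσjC y hy).1, (hσjC y hy).2⟩⟩
    choose σf hσfm hσfprop using hsel
    set σ : (Fin p → ℝ) → (Fin n2 → ℝ) := fun y => σf (J y) y with hσdef
    have hσm : Measurable σ := aux_measurable_bind hJmeas hσfm
    have hσprop : ∀ y ∈ Y, (x1, σ y, y) ∈ K2 ∧
        eval (Sum.elim x1 (σ y)) f2 ≤ v x1 y + ε := by
      intro y hyY
      have hmem := hσfprop (J y) y ⟨hyY, rfl⟩
      refine ⟨hmem.1, ?_⟩
      have h2 : (J y : ℝ) * ε ≤ v x1 y := by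
        have h3 : (J y : ℝ) ≤ v x1 y / ε := Int.floor_le (v x1 y / ε)
        have h4 := mul_le_mul_of_nonneg_right h3 hε.le
        rwa [div_mul_cancel₀ _ (ne_of_gt hε)] at h4
      linarith [hmem.2]
    have hτm : Measurable fun y => ((x1, σ y, y) :
        (Fin n1 → ℝ) × (Fin n2 → ℝ) × (Fin p → ℝ)) :=
      measurable_const.prodMk (hσm.prodMk measurable_id)
    set μ2 : Measure ((Fin n1 → ℝ) × (Fin n2 → ℝ) × (Fin p → ℝ)) :=
      Measure.map (fun y => (x1, σ y, y)) φ with hμ2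
    haveI : IsProbabilityMeasure μ2 := Measure.isProbabilityMeasure_map hτm.aemeasurable
    refine ⟨(∫ z, eval z f1 ∂(Measure.dirac x1)) + ∫ t, eval (Sum.elim t.1 t.2.1) f2 ∂μ2,
      ⟨Measure.dirac x1, μ2, inferInstance, inferInstance, ?_, ?_, ?_, rfl⟩, ?_⟩
    · rw [Measure.dirac_apply' _ hK1m.compl]
      exact Set.indicator_of_notMem (by simpa using hx1) _
    · rw [hμ2, Measure.map_apply hτm hK2m.compl]
      refine measure_mono_null ?_ hφY
      intro y hy
      simp only [Set.mem_preimage, Set.mem_compl_iff] at hy ⊢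
      exact fun hyY => hy (hσprop y hyY).1
    · rw [hμ2, Measure.map_map hπm hτm]
      have hcomp : ((fun t : (Fin n1 → ℝ) × (Fin n2 → ℝ) × (Fin p → ℝ) => (t.1, t.2.2)) ∘
          fun y => (x1, σ y, y)) = Prod.mk x1 := rfl
      rw [hcomp, ← Measure.dirac_prod]
    · have hid : ∫ z, eval z f1 ∂(Measure.dirac x1) = eval x1 f1 := integral_dirac _ x1
      have hmap2 : ∫ t, eval (Sum.elim t.1 t.2.1) f2 ∂μ2
          = ∫ y, eval (Sum.elim x1 (σ y)) f2 ∂φ := by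
        rw [hμ2, integral_map hτm.aemeasurable hcont2'.aestronglyMeasurable]
      have hIf2σ : Integrable (fun y => eval (Sum.elim x1 (σ y)) f2) φ := by
        have hElimM : Measurable fun y => Sum.elim x1 (σ y) := by
          apply measurable_pi_lambda
          intro i
          cases i with
          | inl i => exact measurable_const
          | inr i => exact (measurable_pi_apply i).comp hσm
        refine Integrable.mono' (integrable_const C2)
          (((MvPolynomial.continuous_eval f2).measurable.comp hElimM).aestronglyMeasurable) ?_
        filter_upwards [haeY] with y hy
        exact hb2n _ _ _ (hσprop y hy).1
      have hle : ∫ y, eval (Sum.elim x1 (σ y)) f2 ∂φ ≤ ∫ y, (v x1 y + ε) ∂φ := by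
        refine integral_mono_ae hIf2σ ((hIv x1 hx1).add (integrable_const ε)) ?_
        filter_upwards [haeY] with y hy
        exact (hσprop y hy).2
      have heq : ∫ y, (v x1 y + ε) ∂φ = (∫ y, v x1 y ∂φ) + ε := by
        rw [integral_add (hIv x1 hx1) (integrable_const ε)]
        simp [integral_const, measure_univ]
      rw [hid, hmap2]
      linarith
  -- assemble
  obtain ⟨c0, hc0mem, _⟩ := hdir2 x10 hx10 1 one_pos
  have hS12bdd : BddBelow {c | ∃ (μ1 : Measure (Fin n1 → ℝ))
        (μ2 : Measure ((Fin n1 → ℝ) × (Fin n2 → ℝ) × (Fin p → ℝ))),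
      IsProbabilityMeasure μ1 ∧ IsFiniteMeasure μ2 ∧
      μ1 K1ᶜ = 0 ∧ μ2 K2ᶜ = 0 ∧
      Measure.map (fun t => (t.1, t.2.2)) μ2 = μ1.prod φ ∧
      c = (∫ x1, eval x1 f1 ∂μ1) + ∫ t, eval (Sum.elim t.1 t.2.1) f2 ∂μ2} :=
    ⟨ρ, fun c hc => hdir1 c hc⟩
  apply le_antisymm
  · rw [hρ]
    refine le_csInf ⟨_, x10, hx10, rfl⟩ ?_
    rintro b ⟨x1, hx1, rfl⟩
    refine le_of_forall_pos_le_add ?_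
    intro ε hε
    obtain ⟨c, hcmem, hcle⟩ := hdir2 x1 hx1 ε hε
    calc ρ12 ≤ c := by
          rw [hρ12]
          exact csInf_le hS12bdd hcmem
      _ ≤ eval x1 f1 + (∫ y, v x1 y ∂φ) + ε := hcle
  · rw [hρ12]
    exact le_csInf ⟨c0, hc0mem⟩ fun c hc => hdir1 c hc
end

section
/- Two-stage equivalence, part (b): If x1* ∈ K1 is an optimal solution of the two-stage stochastic program, i.e. f1(x1*) + ∫_Y v*(x1*,y) dφ(y) = ρ, then the generalized moment problem admits an optimal solution whose first-stage measure is the Dirac measure δ_{x1*}; that is, there exists a nonnegative finite Borel measure μ2* supported in K2 whose pushforward under (x1,x2,y) ↦ (x1,y) equals δ_{x1*} ⊗ φ and which satisfies ∫ f1 dδ_{x1*} + ∫ f2 dμ2* = ρ₁₂. -/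
open MeasureTheory MvPolynomial

set_option maxHeartbeats 1000000

section Aux

open Set

lemma isClosed_proj_of_compact {α β : Type*} [TopologicalSpace α] [TopologicalSpace β]
    {W : Set (α × β)} (hW : IsClosed W) {C : Set β} (hC : IsCompact C)
    (hsub : ∀ z ∈ W, z.2 ∈ C) : IsClosed {a | ∃ b, (a, b) ∈ W} := by
  have : CompactSpace C := isCompact_iff_compactSpace.mp hC
  have hmap : IsClosedMap (Prod.fst : α × C → α) := isClosedMap_fst_of_compactSpace
  have hW' : IsClosed {z : α × C | ((z.1 : α), (z.2 : β)) ∈ W} :=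
    hW.preimage (by fun_prop)
  have himg := hmap _ hW'
  convert himg using 1
  ext a
  simp only [Set.mem_setOf_eq, Set.mem_image]
  constructor
  · rintro ⟨b, hb⟩
    exact ⟨(a, ⟨b, hsub _ hb⟩), hb, rfl⟩
  · rintro ⟨⟨a', b⟩, hb, rfl⟩
    exact ⟨b, hb⟩

lemma isClosed_forall {ι β : Type*} [TopologicalSpace β] {P : ι → β → Prop}
    (h : ∀ i, IsClosed {x | P i x}) : IsClosed {x | ∀ i, P i x} := by
  have he : {x | ∀ i, P i x} = ⋂ i, {x | P i x} := by ext; simp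
  rw [he]; exact isClosed_iInter h

section Selection

variable {α : Type*} [TopologicalSpace α] [T2Space α]
  [MeasurableSpace α] [OpensMeasurableSpace α] {n : ℕ}

/-- The key measurability lemma: the value of a parametric minimization over a compact set
is a measurable function of the parameters. -/
lemma measurable_parametric_inf (K : Set (α × (Fin n → ℝ))) (hK : IsCompact K)
    (f : (Fin n → ℝ) → ℝ) (hf : Continuous f) (k : Fin n) :
    Measurable (fun z : α × ℝ × (Fin n → ℝ) =>
      sInf ((fun x => x k) ''
        {x | (z.1, x) ∈ K ∧ f x ≤ z.2.1 ∧ ∀ j, x j ≤ z.2.2 j})) := by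
  set C : Set (Fin n → ℝ) := Prod.snd '' K with hC
  have hCc : IsCompact C := hK.image continuous_snd
  -- the graph of the feasibility multifunction
  set Feas : (α × ℝ × (Fin n → ℝ)) → Set (Fin n → ℝ) :=
    fun z => {x | (z.1, x) ∈ K ∧ f x ≤ z.2.1 ∧ ∀ j, x j ≤ z.2.2 j} with hFeas
  have hsec : ∀ z, IsCompact (Feas z) := by
    intro z
    have h1 : IsClosed (Feas z) := by
      apply IsClosed.inter
      · exact (hK.isClosed).preimage (continuous_const.prodMk continuous_id)
      · apply IsClosed.inter
        · exact isClosed_le hf continuous_const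
        · exact isClosed_forall fun j => isClosed_le (continuous_apply j) continuous_const
    have h2 : Feas z ⊆ C := fun x hx => ⟨(z.1, x), hx.1, rfl⟩
    exact hCc.of_isClosed_subset h1 h2
  -- closedness of the relevant projections
  have hWclosed : ∀ r : ℝ, IsClosed {z : α × ℝ × (Fin n → ℝ) | ∃ x, x ∈ Feas z ∧ x k ≤ r} := by
    intro r
    have : {z : α × ℝ × (Fin n → ℝ) | ∃ x, x ∈ Feas z ∧ x k ≤ r}
        = {z | ∃ x, (z, x) ∈ {w : (α × ℝ × (Fin n → ℝ)) × (Fin n → ℝ) |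
            (w.1.1, w.2) ∈ K ∧ f w.2 ≤ w.1.2.1 ∧ (∀ j, w.2 j ≤ w.1.2.2 j) ∧ w.2 k ≤ r}} := by
      ext z; simp [hFeas, and_assoc]
    rw [this]
    apply isClosed_proj_of_compact _ hCc
    · intro w hw; exact ⟨(w.1.1, w.2), hw.1, rfl⟩
    · apply IsClosed.inter
      · exact (hK.isClosed).preimage (by fun_prop)
      · apply IsClosed.inter
        · exact isClosed_le (hf.comp continuous_snd) continuous_fst.snd.fst
        · apply IsClosed.inter
          · exact isClosed_forall fun j => isClosed_le
              ((continuous_apply j).comp continuous_snd)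
              ((continuous_apply j).comp continuous_fst.snd.snd)
          · exact isClosed_le ((continuous_apply k).comp continuous_snd) continuous_const
    
  have hNclosed : IsClosed {z : α × ℝ × (Fin n → ℝ) | ∃ x, x ∈ Feas z} := by
    have : {z : α × ℝ × (Fin n → ℝ) | ∃ x, x ∈ Feas z}
        = {z | ∃ x, (z, x) ∈ {w : (α × ℝ × (Fin n → ℝ)) × (Fin n → ℝ) |
            (w.1.1, w.2) ∈ K ∧ f w.2 ≤ w.1.2.1 ∧ (∀ j, w.2 j ≤ w.1.2.2 j)}} := by
      ext z; simp [hFeas]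
    rw [this]
    apply isClosed_proj_of_compact _ hCc
    · intro w hw; exact ⟨(w.1.1, w.2), hw.1, rfl⟩
    · apply IsClosed.inter
      · exact (hK.isClosed).preimage (by fun_prop)
      · apply IsClosed.inter
        · exact isClosed_le (hf.comp continuous_snd) continuous_fst.snd.fst
        · exact isClosed_forall fun j => isClosed_le
            ((continuous_apply j).comp continuous_snd)
            ((continuous_apply j).comp continuous_fst.snd.snd)
  -- sublevel sets
  apply measurable_of_Iic
  intro r
  have hset : (fun z : α × ℝ × (Fin n → ℝ) =>
      sInf ((fun x => x k) '' Feas z)) ⁻¹' (Iic r)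
      = {z | ∃ x, x ∈ Feas z ∧ x k ≤ r} ∪
        ({z | ∃ x, x ∈ Feas z}ᶜ ∩ {z | (0:ℝ) ≤ r}) := by
    ext z
    simp only [mem_preimage, mem_Iic, mem_union, mem_setOf_eq, mem_inter_iff, mem_compl_iff]
    by_cases hne : (Feas z).Nonempty
    · have himg : IsCompact ((fun x => x k) '' Feas z) := (hsec z).image (continuous_apply k)
      have himgne : ((fun x => x k) '' Feas z).Nonempty := hne.image _
      have hmem := himg.sInf_mem himgne
      constructor
      · intro hle
        obtain ⟨x, hx, hxk⟩ := hmem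
        exact Or.inl ⟨x, hx, hxk.trans_le hle⟩
      · rintro (⟨x, hx, hxk⟩ | ⟨habs, _⟩)
        · exact le_trans (csInf_le himg.bddBelow ⟨x, hx, rfl⟩) hxk
        · exact (habs ⟨hne.choose, hne.choose_spec⟩).elim
    · rw [not_nonempty_iff_eq_empty] at hne
      simp [hne, Real.sInf_empty]
  rw [hset]
  apply MeasurableSet.union ((hWclosed r).measurableSet)
  exact (hNclosed.measurableSet.compl).inter (MeasurableSet.const _)

end Selection

section Selection

variable {α : Type*} [TopologicalSpace α] [T2Space α]
  [MeasurableSpace α] [OpensMeasurableSpace α] {n : ℕ}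

/-- Measurable selection of a minimizer over compact sections. -/
lemma exists_measurable_argmin (K : Set (α × (Fin n → ℝ))) (hK : IsCompact K)
    (f : (Fin n → ℝ) → ℝ) (hf : Continuous f) (v : α → ℝ) (hv : Measurable v) :
    ∃ σ : α → (Fin n → ℝ), Measurable σ ∧ ∀ y,
      {x | (y, x) ∈ K}.Nonempty → v y = sInf (f '' {x | (y, x) ∈ K}) →
      (y, σ y) ∈ K ∧ f (σ y) = v y := by
  classical
  set C : Set (Fin n → ℝ) := Prod.snd '' K with hC
  have hCc : IsCompact C := hK.image continuous_snd
  obtain ⟨R, hR⟩ : ∃ R : ℝ, ∀ x ∈ C, ∀ j, x j ≤ R := by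
    rcases C.eq_empty_or_nonempty with hCe | hCne
    · exact ⟨0, by simp [hCe]⟩
    · obtain ⟨x0, _, hx0⟩ := hCc.exists_isMaxOn hCne continuous_norm.continuousOn
      exact ⟨‖x0‖, fun x hx j => le_trans (le_trans (le_abs_self _) (norm_le_pi_norm x j))
        (isMaxOn_iff.mp hx0 x hx)⟩
  set Φ : Fin n → (α × ℝ × (Fin n → ℝ)) → ℝ := fun k z =>
    sInf ((fun x => x k) '' {x | (z.1, x) ∈ K ∧ f x ≤ z.2.1 ∧ ∀ j, x j ≤ z.2.2 j}) with hΦ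
  have hΦm : ∀ k, Measurable (Φ k) := fun k => measurable_parametric_inf K hK f hf k
  set b : ℕ → α → (Fin n → ℝ) := fun m => Nat.rec (fun _ _ => R)
    (fun m bm y => if h : m < n then
        Function.update (bm y) ⟨m, h⟩ (Φ ⟨m, h⟩ (y, v y, bm y)) else bm y) m with hb
  have hbm : ∀ m, Measurable (b m) := by
    intro m
    induction m with
    | zero => exact measurable_const
    | succ m ih =>
      by_cases h : m < n
      · have : b (m + 1) = fun y =>
            Function.update (b m y) ⟨m, h⟩ (Φ ⟨m, h⟩ (y, v y, b m y)) := by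
          funext y; simp [hb, h]
        rw [this]
        apply measurable_pi_lambda
        intro j
        have hcomp : Measurable fun y => Φ ⟨m, h⟩ (y, v y, b m y) :=
          (hΦm _).comp (measurable_id.prodMk (hv.prodMk ih))
        by_cases hj : j = ⟨m, h⟩
        · subst hj
          simpa [Function.update_self] using hcomp
        · simp only [Function.update_of_ne hj]
          exact (measurable_pi_apply j).comp ih
      · have : b (m + 1) = b m := by funext y; simp [hb, h]
        rw [this]; exact ih
  refine ⟨b n, hbm n, ?_⟩
  intro y hne hvy
  set S : ℕ → Set (Fin n → ℝ) := fun m =>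
    {x | (y, x) ∈ K ∧ f x ≤ v y ∧ ∀ j, x j ≤ b m y j} with hS
  have hsecC : ∀ x, (y, x) ∈ K → x ∈ C := fun x hx => ⟨(y, x), hx, rfl⟩
  have hScpt : ∀ m, IsCompact (S m) := by
    intro m
    have h1 : IsClosed (S m) := by
      apply IsClosed.inter ((hK.isClosed).preimage (continuous_const.prodMk continuous_id))
      apply IsClosed.inter (isClosed_le hf continuous_const)
      exact isClosed_forall fun j => isClosed_le (continuous_apply j) continuous_const
    exact hCc.of_isClosed_subset h1 fun x hx => hsecC x hx.1
  have hbsucc_le : ∀ m (h : m < n), ∀ j, j ≠ ⟨m, h⟩ → b (m+1) y j = b m y j := by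
    intro m h j hj
    simp [hb, h, Function.update_of_ne hj]
  have hbsucc_eq : ∀ m (h : m < n),
      b (m+1) y ⟨m, h⟩ = sInf ((fun x => x ⟨m, h⟩) '' S m) := by
    intro m h
    simp only [hb, hS]
    simp [h, Function.update_self, hΦ]
  have hbstall : ∀ m, ¬ m < n → b (m+1) y = b m y := by
    intro m h; simp [hb, h]
  have main : ∀ m, (S m).Nonempty ∧ (∀ x ∈ S m, ∀ j : Fin n, (j : ℕ) < m → x j = b m y j) := by
    intro m
    induction m with
    | zero =>
      constructor
      · have hsec_cpt : IsCompact {x | (y, x) ∈ K} := by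
          have h1 : IsClosed {x : Fin n → ℝ | (y, x) ∈ K} :=
            (hK.isClosed).preimage (continuous_const.prodMk continuous_id)
          exact hCc.of_isClosed_subset h1 fun x hx => hsecC x hx
        have himg : IsCompact (f '' {x | (y, x) ∈ K}) := hsec_cpt.image hf
        have hmem := himg.sInf_mem (hne.image f)
        rw [← hvy] at hmem
        obtain ⟨x, hx, hfx⟩ := hmem
        exact ⟨x, hx, le_of_eq hfx, fun j => hR x (hsecC x hx) j⟩
      · intro x _ j hj; exact absurd hj (Nat.not_lt_zero _)
    | succ m ih =>
      obtain ⟨ihne, ihpin⟩ := ih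
      by_cases h : m < n
      · have himg : IsCompact ((fun x => x ⟨m, h⟩) '' S m) :=
          (hScpt m).image (continuous_apply _)
        have hmem := himg.sInf_mem (ihne.image _)
        obtain ⟨x, hx, hxk⟩ := hmem
        have hSsub : S (m+1) ⊆ S m := by
          intro z hz
          refine ⟨hz.1, hz.2.1, fun j => ?_⟩
          by_cases hj : j = ⟨m, h⟩
          · subst hj
            calc z ⟨m, h⟩ ≤ b (m+1) y ⟨m, h⟩ := hz.2.2 _
              _ = sInf ((fun x => x ⟨m, h⟩) '' S m) := hbsucc_eq m h
              _ = x ⟨m, h⟩ := hxk.symm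
              _ ≤ b m y ⟨m, h⟩ := hx.2.2 _
          · exact le_trans (hz.2.2 j) (le_of_eq (hbsucc_le m h j hj))
        have hxmem : x ∈ S (m+1) := by
          refine ⟨hx.1, hx.2.1, fun j => ?_⟩
          by_cases hj : j = ⟨m, h⟩
          · subst hj
            rw [hbsucc_eq m h]
            exact le_of_eq hxk
          · rw [hbsucc_le m h j hj]
            exact hx.2.2 j
        refine ⟨⟨x, hxmem⟩, ?_⟩
        intro z hz j hj
        rcases Nat.lt_succ_iff_lt_or_eq.mp hj with hj' | hj'
        · have hjk : j ≠ ⟨m, h⟩ := by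
            intro hcon
            rw [hcon] at hj'
            exact absurd hj' (lt_irrefl m)
          rw [hbsucc_le m h j hjk]
          exact ihpin z (hSsub hz) j hj'
        · have hjk : j = ⟨m, h⟩ := Fin.ext hj'
          subst hjk
          refine le_antisymm (hz.2.2 _) ?_
          rw [hbsucc_eq m h]
          exact csInf_le himg.bddBelow ⟨z, hSsub hz, rfl⟩
      · have hbeq : b (m+1) y = b m y := hbstall m h
        have hSeq : S (m+1) = S m := by
          simp only [hS, hbeq]
        constructor
        · rw [hSeq]; exact ihne
        · intro z hz j hj
          rw [hbeq]
          refine ihpin z (hSeq ▸ hz) j ?_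
          exact lt_of_lt_of_le j.2 (Nat.not_lt.mp h)
  obtain ⟨⟨x, hx⟩, hpin⟩ := main n
  have hxeq : x = b n y := funext fun j => hpin x hx j j.2
  have hKmem : (y, b n y) ∈ K := hxeq ▸ hx.1
  have hle : f (b n y) ≤ v y := hxeq ▸ hx.2.1
  have hsec_cpt : IsCompact {x | (y, x) ∈ K} := by
    have h1 : IsClosed {x : Fin n → ℝ | (y, x) ∈ K} :=
      (hK.isClosed).preimage (continuous_const.prodMk continuous_id)
    exact hCc.of_isClosed_subset h1 fun x hx => hsecC x hx
  have hge : v y ≤ f (b n y) := by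
    rw [hvy]
    exact csInf_le (hsec_cpt.image hf).bddBelow ⟨b n y, hKmem, rfl⟩
  exact ⟨hKmem, le_antisymm hle hge⟩

end Selection


/-- **Theorem 1(b).** If `x1s ∈ K1` is an optimal solution of the two-stage
stochastic program, then the generalized moment problem admits an optimal solution whose
first-stage measure is the Dirac measure `δ_{x1s}`: there is a nonnegative finite Borel
measure `μ2` supported in `K2` whose pushforward under `(x1,x2,y) ↦ (x1,y)` is
`δ_{x1s} ⊗ φ` and whose objective value equals `ρ₁₂`. -/
theorem gmp_dirac_optimal_solution
    (n1 n2 p Nq Nh Ng NgY : ℕ) (hn1 : 0 < n1) (hn2 : 0 < n2) (hp : 0 < p)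
    (f1 : MvPolynomial (Fin n1) ℝ) (f2 : MvPolynomial (Fin n1 ⊕ Fin n2) ℝ)
    (q : Fin Nq → MvPolynomial (Fin n1) ℝ)
    (h : Fin Nh → MvPolynomial (Fin n1 ⊕ Fin n2 ⊕ Fin p) ℝ)
    (g : Fin Ng → MvPolynomial (Fin n1 ⊕ Fin n2 ⊕ Fin p) ℝ)
    (gY : Fin NgY → MvPolynomial (Fin p) ℝ)
    (K1 : Set (Fin n1 → ℝ)) (Y : Set (Fin p → ℝ))
    (K2 : Set ((Fin n1 → ℝ) × (Fin n2 → ℝ) × (Fin p → ℝ)))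
    (hK1 : K1 = {x1 | ∀ l, 0 ≤ eval x1 (q l)})
    (hY : Y = {y | ∀ j, 0 ≤ eval y (gY j)})
    (hK2 : K2 = {t | t.1 ∈ K1 ∧ t.2.2 ∈ Y ∧
      (∀ i, eval (Sum.elim t.1 (Sum.elim t.2.1 t.2.2)) (h i) = 0) ∧
      (∀ j, 0 ≤ eval (Sum.elim t.1 (Sum.elim t.2.1 t.2.2)) (g j))})
    (φ : Measure (Fin p → ℝ)) (hφ : IsProbabilityMeasure φ) (hφY : φ Yᶜ = 0)
    (hK1c : IsCompact K1) (hK2c : IsCompact K2) (hYc : IsCompact Y)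
    (hK1ne : K1.Nonempty) (hYne : Y.Nonempty)
    (hfeas : ∀ x1 ∈ K1, ∀ y ∈ Y, ∃ x2, (x1, x2, y) ∈ K2)
    (v : (Fin n1 → ℝ) → (Fin p → ℝ) → ℝ)
    (hv : ∀ x1 y, v x1 y =
      sInf {c | ∃ x2, (x1, x2, y) ∈ K2 ∧ c = eval (Sum.elim x1 x2) f2})
    (hvmeas : Measurable fun t : (Fin n1 → ℝ) × (Fin p → ℝ) => v t.1 t.2)
    (ρ ρ12 : ℝ)
    (hρ : ρ = sInf {c | ∃ x1 ∈ K1, c = eval x1 f1 + ∫ y in Y, v x1 y ∂φ})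
    (hρ12 : ρ12 = sInf {c | ∃ (μ1 : Measure (Fin n1 → ℝ))
        (μ2 : Measure ((Fin n1 → ℝ) × (Fin n2 → ℝ) × (Fin p → ℝ))),
      IsProbabilityMeasure μ1 ∧ IsFiniteMeasure μ2 ∧
      μ1 K1ᶜ = 0 ∧ μ2 K2ᶜ = 0 ∧
      Measure.map (fun t => (t.1, t.2.2)) μ2 = μ1.prod φ ∧
      c = (∫ x1, eval x1 f1 ∂μ1) + ∫ t, eval (Sum.elim t.1 t.2.1) f2 ∂μ2})
    (x1s : Fin n1 → ℝ) (hx1s : x1s ∈ K1)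
    (hopt : eval x1s f1 + ∫ y in Y, v x1s y ∂φ = ρ) :
    ∃ μ2 : Measure ((Fin n1 → ℝ) × (Fin n2 → ℝ) × (Fin p → ℝ)),
      IsFiniteMeasure μ2 ∧ μ2 K2ᶜ = 0 ∧
      Measure.map (fun t => (t.1, t.2.2)) μ2 = (Measure.dirac x1s).prod φ ∧
      (∫ x1, eval x1 f1 ∂(Measure.dirac x1s)) +
        (∫ t, eval (Sum.elim t.1 t.2.1) f2 ∂μ2) = ρ12 := by
    classical
  haveI := hφ
  -- continuity of polynomial objective functions
  have hcf1 : Continuous fun x1 : Fin n1 → ℝ => eval x1 f1 := f1.continuous_eval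
  have hc2sub : Continuous fun t : (Fin n1 → ℝ) × (Fin n2 → ℝ) × (Fin p → ℝ) =>
      Sum.elim t.1 t.2.1 := by
    apply continuous_pi
    intro i
    cases i with
    | inl a => exact (continuous_apply a).comp continuous_fst
    | inr a => exact (continuous_apply a).comp (continuous_fst.comp continuous_snd)
  have hcf2 : Continuous fun t : (Fin n1 → ℝ) × (Fin n2 → ℝ) × (Fin p → ℝ) =>
      eval (Sum.elim t.1 t.2.1) f2 := f2.continuous_eval.comp hc2sub
  -- measurable sets
  have hK1m : MeasurableSet K1 := hK1c.isClosed.measurableSet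
  have hK2m : MeasurableSet K2 := hK2c.isClosed.measurableSet
  have hYm : MeasurableSet Y := hYc.isClosed.measurableSet
  -- nonemptiness of K2
  obtain ⟨y0, hy0⟩ := hYne
  obtain ⟨x20, hx20⟩ := hfeas x1s hx1s y0 hy0
  have hK2ne : K2.Nonempty := ⟨_, hx20⟩
  -- bounds for f2 on K2
  obtain ⟨m, hm⟩ : ∃ m : ℝ, ∀ t ∈ K2, m ≤ eval (Sum.elim t.1 t.2.1) f2 := by
    obtain ⟨tm, _, htm⟩ := hK2c.exists_isMinOn hK2ne hcf2.continuousOn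
    exact ⟨_, fun t ht => isMinOn_iff.mp htm t ht⟩
  obtain ⟨M, hM⟩ : ∃ M : ℝ, ∀ t ∈ K2, eval (Sum.elim t.1 t.2.1) f2 ≤ M := by
    obtain ⟨tM, _, htM⟩ := hK2c.exists_isMaxOn hK2ne hcf2.continuousOn
    exact ⟨_, fun t ht => isMaxOn_iff.mp htM t ht⟩
  set Mv : ℝ := max |m| |M| with hMv_def
  have habs : ∀ r : ℝ, m ≤ r → r ≤ M → ‖r‖ ≤ Mv := by
    intro r h1 h2
    rw [Real.norm_eq_abs, abs_le]
    constructor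
    · have := neg_abs_le m; have := le_max_left |m| |M|; linarith
    · have := le_abs_self M; have := le_max_right |m| |M|; linarith
  have hMv0 : 0 ≤ Mv := le_trans (abs_nonneg m) (le_max_left _ _)
  -- the second-stage value sets are nonempty and bounded
  have hvlb : ∀ x1 y, BddBelow {c | ∃ x2, (x1, x2, y) ∈ K2 ∧ c = eval (Sum.elim x1 x2) f2} := by
    intro x1 y
    refine ⟨m, ?_⟩
    rintro c ⟨x2, hx2, rfl⟩
    exact hm (x1, x2, y) hx2
  have hvb : ∀ x1 ∈ K1, ∀ y ∈ Y, m ≤ v x1 y ∧ v x1 y ≤ M := by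
    intro x1 hx1 y hy
    obtain ⟨x2, hx2⟩ := hfeas x1 hx1 y hy
    rw [hv]
    constructor
    · exact le_csInf ⟨eval (Sum.elim x1 x2) f2, ⟨x2, hx2, rfl⟩⟩
        (by rintro c ⟨x2', hx2', rfl⟩; exact hm (x1, x2', y) hx2')
    · exact le_trans (csInf_le (hvlb x1 y) ⟨x2, hx2, rfl⟩) (hM (x1, x2, y) hx2)
  have hvnorm : ∀ x1 ∈ K1, ∀ y ∈ Y, ‖v x1 y‖ ≤ Mv := fun x1 hx1 y hy =>
    habs _ (hvb x1 hx1 y hy).1 (hvb x1 hx1 y hy).2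
  -- φ is concentrated on Y
  have haeY : ∀ᵐ y ∂φ, y ∈ Y := by
    rw [MeasureTheory.ae_iff]
    exact hφY
  have hres : φ.restrict Y = φ := Measure.restrict_eq_self_of_ae_mem haeY
  -- the measurable selection of second-stage minimizers for x1 = x1s
  have hKsel : IsCompact {z : (Fin p → ℝ) × (Fin n2 → ℝ) | (x1s, z.2, z.1) ∈ K2} := by
    have h1 : IsClosed {z : (Fin p → ℝ) × (Fin n2 → ℝ) | (x1s, z.2, z.1) ∈ K2} :=
      hK2c.isClosed.preimage (by fun_prop)
    have h2 : {z : (Fin p → ℝ) × (Fin n2 → ℝ) | (x1s, z.2, z.1) ∈ K2} ⊆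
        (fun t : (Fin n1 → ℝ) × (Fin n2 → ℝ) × (Fin p → ℝ) => (t.2.2, t.2.1)) '' K2 := by
      intro z hz
      exact ⟨(x1s, z.2, z.1), hz, rfl⟩
    exact (hK2c.image (by fun_prop)).of_isClosed_subset h1 h2
  have hcfx : Continuous fun x2 : Fin n2 → ℝ => eval (Sum.elim x1s x2) f2 := by
    have : Continuous fun x2 : Fin n2 → ℝ => Sum.elim x1s x2 := by
      apply continuous_pi
      intro i
      cases i with
      | inl a => exact continuous_const
      | inr a => exact continuous_apply a
    exact f2.continuous_eval.comp this
  have hvYm : Measurable fun y => v x1s y :=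
    hvmeas.comp (measurable_const.prodMk measurable_id)
  obtain ⟨σf, hσm, hσ⟩ := exists_measurable_argmin
    {z : (Fin p → ℝ) × (Fin n2 → ℝ) | (x1s, z.2, z.1) ∈ K2} hKsel
    (fun x2 => eval (Sum.elim x1s x2) f2) hcfx (fun y => v x1s y) hvYm
  have hsel : ∀ y ∈ Y, (x1s, σf y, y) ∈ K2 ∧ eval (Sum.elim x1s (σf y)) f2 = v x1s y := by
    intro y hy
    have hne : {x2 : Fin n2 → ℝ | (y, x2) ∈
        {z : (Fin p → ℝ) × (Fin n2 → ℝ) | (x1s, z.2, z.1) ∈ K2}}.Nonempty := by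
      obtain ⟨x2, hx2⟩ := hfeas x1s hx1s y hy
      exact ⟨x2, hx2⟩
    have hvy : v x1s y = sInf ((fun x2 => eval (Sum.elim x1s x2) f2) ''
        {x2 : Fin n2 → ℝ | (y, x2) ∈
          {z : (Fin p → ℝ) × (Fin n2 → ℝ) | (x1s, z.2, z.1) ∈ K2}}) := by
      rw [hv]
      congr 1
      ext c
      constructor
      · rintro ⟨x2, hx2, rfl⟩
        exact ⟨x2, hx2, rfl⟩
      · rintro ⟨x2, hx2, rfl⟩
        exact ⟨x2, hx2, rfl⟩
    exact hσ y hne hvy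
  -- construct the second-stage measure
  set T : (Fin p → ℝ) → (Fin n1 → ℝ) × (Fin n2 → ℝ) × (Fin p → ℝ) :=
    fun y => (x1s, σf y, y) with hT
  have hTm : Measurable T := measurable_const.prodMk (hσm.prodMk measurable_id)
  set μ2 : Measure ((Fin n1 → ℝ) × (Fin n2 → ℝ) × (Fin p → ℝ)) := Measure.map T φ with hμ2
  haveI hμ2P : IsProbabilityMeasure μ2 := Measure.isProbabilityMeasure_map hTm.aemeasurable
  have hμ2K2 : μ2 K2ᶜ = 0 := by
    rw [hμ2, Measure.map_apply hTm hK2m.compl]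
    refine measure_mono_null ?_ hφY
    intro y hy
    intro hyY
    exact hy (hsel y hyY).1
  have hproj : Measurable fun t : (Fin n1 → ℝ) × (Fin n2 → ℝ) × (Fin p → ℝ) =>
      (t.1, t.2.2) := measurable_fst.prodMk measurable_snd.snd
  have hmarg : Measure.map (fun t : (Fin n1 → ℝ) × (Fin n2 → ℝ) × (Fin p → ℝ) =>
      (t.1, t.2.2)) μ2 = (Measure.dirac x1s).prod φ := by
    rw [hμ2, Measure.map_map hproj hTm, Measure.dirac_prod]
    rfl
  -- objective value of μ2
  have hobj2 : ∫ t, eval (Sum.elim t.1 t.2.1) f2 ∂μ2 = ∫ y in Y, v x1s y ∂φ := by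
    rw [hμ2, integral_map hTm.aemeasurable hcf2.aestronglyMeasurable, hres]
    refine integral_congr_ae ?_
    filter_upwards [haeY] with y hy
    exact (hsel y hy).2
  have hdint : ∫ x1, eval x1 f1 ∂(Measure.dirac x1s) = eval x1s f1 :=
    integral_dirac _ x1s
  have hobj : (∫ x1, eval x1 f1 ∂(Measure.dirac x1s)) +
      (∫ t, eval (Sum.elim t.1 t.2.1) f2 ∂μ2) = ρ := by
    rw [hdint, hobj2, hopt]
  -- bound for f1 on K1
  obtain ⟨m1, hm1⟩ : ∃ m1 : ℝ, ∀ x1 ∈ K1, m1 ≤ eval x1 f1 := by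
    obtain ⟨t1, _, ht1⟩ := hK1c.exists_isMinOn hK1ne hcf1.continuousOn
    exact ⟨_, fun x1 hx1 => isMinOn_iff.mp ht1 x1 hx1⟩
  obtain ⟨M1, hM1⟩ : ∃ M1 : ℝ, ∀ x1 ∈ K1, ‖eval x1 f1‖ ≤ M1 := by
    obtain ⟨t1, _, ht1⟩ := hK1c.exists_isMaxOn hK1ne
      (continuous_norm.comp hcf1).continuousOn
    exact ⟨_, fun x1 hx1 => isMaxOn_iff.mp ht1 x1 hx1⟩
  -- uniform bound for the expected second-stage value
  have hIntVnorm : ∀ x1 ∈ K1, ‖∫ y, v x1 y ∂φ‖ ≤ Mv := by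
    intro x1 hx1
    have := norm_integral_le_of_norm_le_const (μ := φ) (C := Mv)
      (by filter_upwards [haeY] with y hy; exact hvnorm x1 hx1 y hy)
    simpa [measure_univ] using this
  -- lower-boundedness of the two-stage objective set
  have hρbdd : BddBelow {c | ∃ x1 ∈ K1, c = eval x1 f1 + ∫ y in Y, v x1 y ∂φ} := by
    refine ⟨m1 - Mv, ?_⟩
    rintro c ⟨x1, hx1, rfl⟩
    rw [hres]
    have h1 := hm1 x1 hx1
    have h2 := (abs_le.mp ((Real.norm_eq_abs _) ▸ hIntVnorm x1 hx1)).1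
    linarith
  -- the GMP feasible set
  set S12 : Set ℝ := {c | ∃ (μ1 : Measure (Fin n1 → ℝ))
        (μ2' : Measure ((Fin n1 → ℝ) × (Fin n2 → ℝ) × (Fin p → ℝ))),
      IsProbabilityMeasure μ1 ∧ IsFiniteMeasure μ2' ∧
      μ1 K1ᶜ = 0 ∧ μ2' K2ᶜ = 0 ∧
      Measure.map (fun t => (t.1, t.2.2)) μ2' = μ1.prod φ ∧
      c = (∫ x1, eval x1 f1 ∂μ1) + ∫ t, eval (Sum.elim t.1 t.2.1) f2 ∂μ2'} with hS12
  -- ρ is a member of S12 (via our constructed measure)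
  have hρmem : ρ ∈ S12 := by
    refine ⟨Measure.dirac x1s, μ2, inferInstance, inferInstance, ?_, hμ2K2, hmarg, hobj.symm⟩
    rw [Measure.dirac_apply' _ hK1m.compl]
    simp [hx1s]
  -- ρ is a lower bound for S12
  have hlb : ∀ c ∈ S12, ρ ≤ c := by
    rintro c ⟨μ1, ν2, hP1, hF2, h1c, h2c, hmargc, rfl⟩
    haveI := hP1
    haveI := hF2
    have ha2 : ∀ᵐ t ∂ν2, t ∈ K2 := by
      rw [MeasureTheory.ae_iff]
      exact h2c
    have ha1 : ∀ᵐ x1 ∂μ1, x1 ∈ K1 := by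
      rw [MeasureTheory.ae_iff]
      exact h1c
    -- integrability of the second-stage objective
    have hInt2 : Integrable (fun t => eval (Sum.elim t.1 t.2.1) f2) ν2 := by
      refine ⟨hcf2.aestronglyMeasurable, HasFiniteIntegral.of_bounded (C := Mv) ?_⟩
      filter_upwards [ha2] with t ht
      exact habs _ (hm t ht) (hM t ht)
    -- integrability and domination of the value function
    have hvvm : Measurable fun t : (Fin n1 → ℝ) × (Fin n2 → ℝ) × (Fin p → ℝ) =>
        v t.1 t.2.2 := hvmeas.comp (measurable_fst.prodMk measurable_snd.snd)
    have hK2mem : ∀ t ∈ K2, t.1 ∈ K1 ∧ t.2.2 ∈ Y := by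
      intro t ht
      rw [hK2] at ht
      exact ⟨ht.1, ht.2.1⟩
    have hIntv2 : Integrable (fun t : (Fin n1 → ℝ) × (Fin n2 → ℝ) × (Fin p → ℝ) =>
        v t.1 t.2.2) ν2 := by
      refine ⟨hvvm.aestronglyMeasurable, HasFiniteIntegral.of_bounded (C := Mv) ?_⟩
      filter_upwards [ha2] with t ht
      exact hvnorm t.1 (hK2mem t ht).1 t.2.2 (hK2mem t ht).2
    have hle_ae : ∀ᵐ t ∂ν2, v t.1 t.2.2 ≤ eval (Sum.elim t.1 t.2.1) f2 := by
      filter_upwards [ha2] with t ht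
      rw [hv]
      exact csInf_le (hvlb t.1 t.2.2) ⟨t.2.1, ht, rfl⟩
    have hstep1 : ∫ t, v t.1 t.2.2 ∂ν2 ≤ ∫ t, eval (Sum.elim t.1 t.2.1) f2 ∂ν2 :=
      integral_mono_ae hIntv2 hInt2 hle_ae
    -- transport to the product measure
    have hstep2 : ∫ t, v t.1 t.2.2 ∂ν2 = ∫ z, v z.1 z.2 ∂(μ1.prod φ) := by
      rw [← hmargc, integral_map hproj.aemeasurable
        hvmeas.aestronglyMeasurable]
    -- integrability on the product
    have hprodnull : (μ1.prod φ) ((K1 ×ˢ Y)ᶜ) = 0 := by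
      rw [Set.compl_prod_eq_union]
      refine measure_union_null ?_ ?_
      · rw [Measure.prod_prod]
        simp [h1c]
      · rw [Measure.prod_prod]
        simp [hφY]
    have haprod : ∀ᵐ z ∂(μ1.prod φ), z ∈ K1 ×ˢ Y := by
      rw [MeasureTheory.ae_iff]
      exact hprodnull
    have hIntvv : Integrable (fun z : (Fin n1 → ℝ) × (Fin p → ℝ) => v z.1 z.2)
        (μ1.prod φ) := by
      refine ⟨hvmeas.aestronglyMeasurable, HasFiniteIntegral.of_bounded (C := Mv) ?_⟩
      filter_upwards [haprod] with z hz
      exact hvnorm z.1 hz.1 z.2 hz.2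
    have hstep3 : ∫ z, v z.1 z.2 ∂(μ1.prod φ) = ∫ x1, ∫ y, v x1 y ∂φ ∂μ1 :=
      integral_prod _ hIntvv
    -- integrability of the first-stage objective terms
    have hIntf1 : Integrable (fun x1 => eval x1 f1) μ1 := by
      refine ⟨hcf1.aestronglyMeasurable, HasFiniteIntegral.of_bounded (C := M1) ?_⟩
      filter_upwards [ha1] with x1 hx1
      exact hM1 x1 hx1
    have hIntinner : Integrable (fun x1 => ∫ y, v x1 y ∂φ) μ1 := by
      refine ⟨(hvmeas.stronglyMeasurable.integral_prod_right').aestronglyMeasurable,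
        HasFiniteIntegral.of_bounded (C := Mv) ?_⟩
      filter_upwards [ha1] with x1 hx1
      exact hIntVnorm x1 hx1
    -- pointwise lower bound by ρ
    have hρle_ae : ∀ᵐ x1 ∂μ1, ρ ≤ eval x1 f1 + ∫ y, v x1 y ∂φ := by
      filter_upwards [ha1] with x1 hx1
      rw [hρ]
      refine csInf_le hρbdd ⟨x1, hx1, ?_⟩
      rw [hres]
    have hmono := integral_mono_ae (integrable_const ρ) (hIntf1.add hIntinner) hρle_ae
    rw [integral_const] at hmono
    simp only [probReal_univ, one_smul] at hmono
    have hsum : ∫ x1, (eval x1 f1 + ∫ y, v x1 y ∂φ) ∂μ1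
        = (∫ x1, eval x1 f1 ∂μ1) + ∫ x1, ∫ y, v x1 y ∂φ ∂μ1 :=
      integral_add hIntf1 hIntinner
    calc ρ ≤ ∫ x1, (eval x1 f1 + ∫ y, v x1 y ∂φ) ∂μ1 := hmono
      _ = (∫ x1, eval x1 f1 ∂μ1) + ∫ x1, ∫ y, v x1 y ∂φ ∂μ1 := hsum
      _ = (∫ x1, eval x1 f1 ∂μ1) + ∫ z, v z.1 z.2 ∂(μ1.prod φ) := by rw [hstep3]
      _ = (∫ x1, eval x1 f1 ∂μ1) + ∫ t, v t.1 t.2.2 ∂ν2 := by rw [hstep2]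
      _ ≤ (∫ x1, eval x1 f1 ∂μ1) + ∫ t, eval (Sum.elim t.1 t.2.1) f2 ∂ν2 := by linarith
  -- conclude ρ12 = ρ
  have hρ12eq : ρ12 = ρ := by
    rw [hρ12]
    refine le_antisymm (csInf_le ⟨ρ, hlb⟩ hρmem) (le_csInf ⟨ρ, hρmem⟩ hlb)
  exact ⟨μ2, inferInstance, hμ2K2, hmarg, by rw [hρ12eq]; exact hobj⟩
end Aux
end

section
/- Feasible construction from a deterministic first-stage decision: let x1* ∈ K1 and let s : ℝ^p → ℝ^{n2} be a Borel measurable map such that for φ-almost every y ∈ Y, (x1*, s(y), y) ∈ K2 and f2(x1*, s(y)) = v*(x1*, y). Then the pair (δ_{x1*}, μ2), where μ2 is the pushforward of φ under y ↦ (x1*, s(y), y), is feasible for the generalized moment problem — δ_{x1*} is a probability measure supported in K1, μ2 is supported in K2, and the pushforward of μ2 under (x1,x2,y) ↦ (x1,y) equals δ_{x1*} ⊗ φ — and its objective value satisfies ∫ f1 dδ_{x1*} + ∫ f2 dμ2 = f1(x1*) + ∫_Y v*(x1*, y) dφ(y); consequently ρ₁₂ ≤ f1(x1*) + ∫_Y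 v*(x1*, y) dφ(y). -/
open MeasureTheory MvPolynomial

private lemma aux_integral_lower {α : Type*} [MeasurableSpace α] (μ : Measure α)
    [IsFiniteMeasure μ] (f : α → ℝ) (C : ℝ) (hC : 0 ≤ C) (hμ : μ Set.univ ≤ 1)
    (hf : ∀ᵐ a ∂μ, -C ≤ f a) : -C ≤ ∫ a, f a ∂μ := by
  by_cases hi : Integrable f μ
  · have h1 : ∫ _, (-C : ℝ) ∂μ ≤ ∫ a, f a ∂μ :=
      integral_mono_ae (integrable_const _) hi hf
    have h2 : ∫ _, (-C : ℝ) ∂μ = (μ Set.univ).toReal * (-C) := by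
      simp [integral_const, smul_eq_mul, Measure.real]
    have ht : (μ Set.univ).toReal ≤ 1 := by
      simpa using ENNReal.toReal_mono ENNReal.one_ne_top hμ
    have ht0 : 0 ≤ (μ Set.univ).toReal := ENNReal.toReal_nonneg
    nlinarith
  · rw [integral_undef hi]; linarith

/-- Let `x1s ∈ K1` and let `s` be a Borel measurable map such that for
`φ`-almost every `y ∈ Y`, `(x1s, s y, y) ∈ K2` and `f2 (x1s, s y) = v x1s y`. Then the
pair `(δ_{x1s}, μ2)`, where `μ2` is the pushforward of `φ` under `y ↦ (x1s, s y, y)`, is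
feasible for the generalized moment problem, its objective value equals
`f1 x1s + ∫_Y v x1s y dφ`, and consequently `ρ₁₂ ≤ f1 x1s + ∫_Y v x1s y dφ`. -/
theorem gmp_feasible_from_deterministic_first_stage
    (n1 n2 p Nq Nh Ng NgY : ℕ) (hn1 : 0 < n1) (hn2 : 0 < n2) (hp : 0 < p)
    (f1 : MvPolynomial (Fin n1) ℝ) (f2 : MvPolynomial (Fin n1 ⊕ Fin n2) ℝ)
    (q : Fin Nq → MvPolynomial (Fin n1) ℝ)
    (h : Fin Nh → MvPolynomial (Fin n1 ⊕ Fin n2 ⊕ Fin p) ℝ)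
    (g : Fin Ng → MvPolynomial (Fin n1 ⊕ Fin n2 ⊕ Fin p) ℝ)
    (gY : Fin NgY → MvPolynomial (Fin p) ℝ)
    (K1 : Set (Fin n1 → ℝ)) (Y : Set (Fin p → ℝ))
    (K2 : Set ((Fin n1 → ℝ) × (Fin n2 → ℝ) × (Fin p → ℝ)))
    (hK1 : K1 = {x1 | ∀ l, 0 ≤ eval x1 (q l)})
    (hY : Y = {y | ∀ j, 0 ≤ eval y (gY j)})
    (hK2 : K2 = {t | t.1 ∈ K1 ∧ t.2.2 ∈ Y ∧
      (∀ i, eval (Sum.elim t.1 (Sum.elim t.2.1 t.2.2)) (h i) = 0) ∧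
      (∀ j, 0 ≤ eval (Sum.elim t.1 (Sum.elim t.2.1 t.2.2)) (g j))})
    (φ : Measure (Fin p → ℝ)) (hφ : IsProbabilityMeasure φ) (hφY : φ Yᶜ = 0)
    (hK1c : IsCompact K1) (hK2c : IsCompact K2) (hYc : IsCompact Y)
    (v : (Fin n1 → ℝ) → (Fin p → ℝ) → ℝ)
    (hv : ∀ x1 y, v x1 y =
      sInf {c | ∃ x2, (x1, x2, y) ∈ K2 ∧ c = eval (Sum.elim x1 x2) f2})
    (hvmeas : Measurable fun t : (Fin n1 → ℝ) × (Fin p → ℝ) => v t.1 t.2)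
    (ρ12 : ℝ)
    (hρ12 : ρ12 = sInf {c | ∃ (μ1 : Measure (Fin n1 → ℝ))
        (μ2 : Measure ((Fin n1 → ℝ) × (Fin n2 → ℝ) × (Fin p → ℝ))),
      IsProbabilityMeasure μ1 ∧ IsFiniteMeasure μ2 ∧
      μ1 K1ᶜ = 0 ∧ μ2 K2ᶜ = 0 ∧
      Measure.map (fun t => (t.1, t.2.2)) μ2 = μ1.prod φ ∧
      c = (∫ x1, eval x1 f1 ∂μ1) + ∫ t, eval (Sum.elim t.1 t.2.1) f2 ∂μ2})
    (x1s : Fin n1 → ℝ) (hx1s : x1s ∈ K1)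
    (s : (Fin p → ℝ) → (Fin n2 → ℝ)) (hs : Measurable s)
    (hsae : ∀ᵐ y ∂φ, y ∈ Y →
      (x1s, s y, y) ∈ K2 ∧ eval (Sum.elim x1s (s y)) f2 = v x1s y) :
    IsProbabilityMeasure (Measure.dirac x1s) ∧
    (Measure.dirac x1s) K1ᶜ = 0 ∧
    IsFiniteMeasure (Measure.map (fun y => (x1s, s y, y)) φ) ∧
    (Measure.map (fun y => (x1s, s y, y)) φ) K2ᶜ = 0 ∧
    Measure.map (fun t => (t.1, t.2.2)) (Measure.map (fun y => (x1s, s y, y)) φ)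
      = (Measure.dirac x1s).prod φ ∧
    (∫ x1, eval x1 f1 ∂(Measure.dirac x1s)) +
        (∫ t, eval (Sum.elim t.1 t.2.1) f2 ∂(Measure.map (fun y => (x1s, s y, y)) φ))
      = eval x1s f1 + ∫ y in Y, v x1s y ∂φ ∧
    ρ12 ≤ eval x1s f1 + ∫ y in Y, v x1s y ∂φ := by
  have hT : Measurable fun y : Fin p → ℝ => (x1s, s y, y) :=
    measurable_const.prodMk (hs.prodMk measurable_id)
  have hπ : Measurable fun t : (Fin n1 → ℝ) × (Fin n2 → ℝ) × (Fin p → ℝ) =>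
      (t.1, t.2.2) := measurable_fst.prodMk measurable_snd.snd
  have hK1m : MeasurableSet K1 := hK1c.isClosed.measurableSet
  have hK2m : MeasurableSet K2 := hK2c.isClosed.measurableSet
  have haeY : ∀ᵐ y ∂φ, y ∈ Y := by
    rw [ae_iff]; exact hφY
  have hae2 : ∀ᵐ y ∂φ, (x1s, s y, y) ∈ K2 ∧ eval (Sum.elim x1s (s y)) f2 = v x1s y :=
    hsae.mp (haeY.mono fun y hy hi => hi hy)
  have hd : IsProbabilityMeasure (Measure.dirac x1s) := inferInstance
  have hdK1 : (Measure.dirac x1s) K1ᶜ = 0 := by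
    rw [Measure.dirac_apply' _ hK1m.compl]
    simp [hx1s]
  have hfinP : IsProbabilityMeasure (Measure.map (fun y => (x1s, s y, y)) φ) :=
    Measure.isProbabilityMeasure_map hT.aemeasurable
  have hfin : IsFiniteMeasure (Measure.map (fun y => (x1s, s y, y)) φ) :=
    by infer_instance
  have hμ2K2 : (Measure.map (fun y => (x1s, s y, y)) φ) K2ᶜ = 0 := by
    rw [Measure.map_apply hT hK2m.compl]
    have hmem : ∀ᵐ y ∂φ, (x1s, s y, y) ∈ K2 := hae2.mono fun y hy => hy.1
    exact ae_iff.mp hmem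
  have hmap : Measure.map (fun t => (t.1, t.2.2))
      (Measure.map (fun y => (x1s, s y, y)) φ) = (Measure.dirac x1s).prod φ := by
    rw [Measure.map_map hπ hT, Measure.dirac_prod]
    rfl
  -- objective value
  have hint1 : (∫ x1, eval x1 f1 ∂(Measure.dirac x1s)) = eval x1s f1 :=
    integral_dirac _ _
  have hSum : Continuous fun t : (Fin n1 → ℝ) × (Fin n2 → ℝ) × (Fin p → ℝ) =>
      (Sum.elim t.1 t.2.1 : Fin n1 ⊕ Fin n2 → ℝ) := by
    apply continuous_pi
    rintro (i | i)
    · exact (continuous_apply i).comp continuous_fst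
    · exact (continuous_apply i).comp (continuous_fst.comp continuous_snd)
  have hcont2 : Continuous fun t : (Fin n1 → ℝ) × (Fin n2 → ℝ) × (Fin p → ℝ) =>
      eval (Sum.elim t.1 t.2.1) f2 := f2.continuous_eval.comp hSum
  have hint2 : (∫ t, eval (Sum.elim t.1 t.2.1) f2
        ∂(Measure.map (fun y => (x1s, s y, y)) φ))
      = ∫ y, eval (Sum.elim x1s (s y)) f2 ∂φ :=
    integral_map hT.aemeasurable hcont2.aestronglyMeasurable
  have hint3 : (∫ y, eval (Sum.elim x1s (s y)) f2 ∂φ) = ∫ y, v x1s y ∂φ :=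
    integral_congr_ae (hae2.mono fun y hy => hy.2)
  have hrestr : φ.restrict Y = φ := Measure.restrict_eq_self_of_ae_mem haeY
  have hobj : (∫ x1, eval x1 f1 ∂(Measure.dirac x1s)) +
        (∫ t, eval (Sum.elim t.1 t.2.1) f2 ∂(Measure.map (fun y => (x1s, s y, y)) φ))
      = eval x1s f1 + ∫ y in Y, v x1s y ∂φ := by
    rw [hint1, hint2, hint3, hrestr]
  refine ⟨hd, hdK1, hfin, hμ2K2, hmap, hobj, ?_⟩
  -- the inequality
  subst hρ12
  obtain ⟨C1, hC1⟩ := hK1c.exists_bound_of_continuousOn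
    (f := fun x => eval x f1) f1.continuous_eval.continuousOn
  obtain ⟨C2, hC2⟩ := hK2c.exists_bound_of_continuousOn
    (f := fun t => eval (Sum.elim t.1 t.2.1) f2) hcont2.continuousOn
  have hC1nn : 0 ≤ C1 := le_trans (norm_nonneg _) (hC1 x1s hx1s)
  set C2' : ℝ := max C2 0 with hC2'
  have hC2nn : 0 ≤ C2' := le_max_right _ _
  have hbdd : ∀ c ∈ {c | ∃ (μ1 : Measure (Fin n1 → ℝ))
        (μ2 : Measure ((Fin n1 → ℝ) × (Fin n2 → ℝ) × (Fin p → ℝ))),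
      IsProbabilityMeasure μ1 ∧ IsFiniteMeasure μ2 ∧
      μ1 K1ᶜ = 0 ∧ μ2 K2ᶜ = 0 ∧
      Measure.map (fun t => (t.1, t.2.2)) μ2 = μ1.prod φ ∧
      c = (∫ x1, eval x1 f1 ∂μ1) + ∫ t, eval (Sum.elim t.1 t.2.1) f2 ∂μ2},
      -(C1 + C2') ≤ c := by
    rintro c ⟨μ1, μ2, hμ1P, hμ2F, hμ1K, hμ2K, hmapeq, rfl⟩
    have hμ1ae : ∀ᵐ x ∂μ1, x ∈ K1 := ae_iff.mpr hμ1K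
    have hμ2ae : ∀ᵐ t ∂μ2, t ∈ K2 := ae_iff.mpr hμ2K
    have hmass : μ2 Set.univ ≤ 1 := by
      have h1 : μ2 Set.univ = (μ1.prod φ) Set.univ := by
        rw [← hmapeq, Measure.map_apply hπ MeasurableSet.univ, Set.preimage_univ]
      rw [h1, measure_univ]
    have hb1 : -C1 ≤ ∫ x1, eval x1 f1 ∂μ1 := by
      apply aux_integral_lower μ1 _ C1 hC1nn (le_of_eq measure_univ)
      exact hμ1ae.mono fun x hx => neg_le_of_abs_le (by simpa using hC1 x hx)
    have hb2 : -C2' ≤ ∫ t, eval (Sum.elim t.1 t.2.1) f2 ∂μ2 := by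
      apply aux_integral_lower μ2 _ C2' hC2nn hmass
      refine hμ2ae.mono fun t ht => ?_
      have := neg_le_of_abs_le (by simpa using hC2 t ht)
      have h2 : -C2' ≤ -C2 := neg_le_neg (le_max_left _ _)
      linarith
    linarith
  exact csInf_le ⟨-(C1 + C2'), hbdd⟩
    ⟨Measure.dirac x1s, Measure.map (fun y => (x1s, s y, y)) φ,
      hd, hfin, hdK1, hμ2K2, hmap, hobj.symm⟩
end

section
/- Lower bound direction of the equivalence: for every pair (μ1, μ2) feasible for the generalized moment problem — μ1 a Borel probability measure supported in K1, μ2 a nonnegative finite Borel measure supported in K2, and the pushforward of μ2 under (x1,x2,y) ↦ (x1,y) equal to μ1 ⊗ φ — one has ∫ f1 dμ1 + ∫ f2 dμ2 ≥ ∫ f1 dμ1 + ∫_{K1×Y} v*(x1,y) d(μ1 ⊗ φ)(x1,y) ≥ ρ. Consequently ρ₁₂ ≥ ρ. -/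
open MeasureTheory MvPolynomial

lemma gmp_aux
    {n1 n2 p : ℕ}
    (f1 : MvPolynomial (Fin n1) ℝ) (f2 : MvPolynomial (Fin n1 ⊕ Fin n2) ℝ)
    (K1 : Set (Fin n1 → ℝ)) (Y : Set (Fin p → ℝ))
    (K2 : Set ((Fin n1 → ℝ) × (Fin n2 → ℝ) × (Fin p → ℝ)))
    (φ : Measure (Fin p → ℝ)) (hφ : IsProbabilityMeasure φ) (hφY : φ Yᶜ = 0)
    (hK1c : IsCompact K1) (hK2c : IsCompact K2) (hYc : IsCompact Y)
    (v : (Fin n1 → ℝ) → (Fin p → ℝ) → ℝ)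
    (hv : ∀ x1 y, v x1 y =
      sInf {c | ∃ x2, (x1, x2, y) ∈ K2 ∧ c = eval (Sum.elim x1 x2) f2})
    (hvmeas : Measurable fun t : (Fin n1 → ℝ) × (Fin p → ℝ) => v t.1 t.2)
    (ρ : ℝ)
    (hρ : ρ = sInf {c | ∃ x1 ∈ K1, c = eval x1 f1 + ∫ y in Y, v x1 y ∂φ})
    (μ1 : Measure (Fin n1 → ℝ))
    (μ2 : Measure ((Fin n1 → ℝ) × (Fin n2 → ℝ) × (Fin p → ℝ)))
    (hμ1 : IsProbabilityMeasure μ1) (hμ2 : IsFiniteMeasure μ2)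
    (hμ1K1 : μ1 K1ᶜ = 0) (hμ2K2 : μ2 K2ᶜ = 0)
    (hmap : Measure.map (fun t => (t.1, t.2.2)) μ2 = μ1.prod φ) :
    ((∫ t, eval (Sum.elim t.1 t.2.1) f2 ∂μ2)
        ≥ ∫ t in K1 ×ˢ Y, v t.1 t.2 ∂(μ1.prod φ)) ∧
    ((∫ x1, eval x1 f1 ∂μ1) + (∫ t in K1 ×ˢ Y, v t.1 t.2 ∂(μ1.prod φ)) ≥ ρ) := by
  -- continuity of f2 evaluation
  have hg : Continuous fun t : (Fin n1 → ℝ) × (Fin n2 → ℝ) × (Fin p → ℝ) =>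
      Sum.elim t.1 t.2.1 := by
    apply continuous_pi
    intro i
    cases i with
    | inl i => exact (continuous_apply i).comp continuous_fst
    | inr i => exact (continuous_apply i).comp (continuous_fst.comp continuous_snd)
  have hcont2 : Continuous fun t : (Fin n1 → ℝ) × (Fin n2 → ℝ) × (Fin p → ℝ) =>
      eval (Sum.elim t.1 t.2.1) f2 := (continuous_eval f2).comp hg
  -- bound on f2 over K2
  obtain ⟨C, hC⟩ := hK2c.exists_bound_of_continuousOn hcont2.continuousOn
  set M : ℝ := max C 0 with hMdef
  have hM0 : (0:ℝ) ≤ M := le_max_right _ _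
  have hMb : ∀ t ∈ K2, ‖eval (Sum.elim t.1 t.2.1) f2‖ ≤ M :=
    fun t ht => le_trans (hC t ht) (le_max_left _ _)
  -- the value set
  set S : (Fin n1 → ℝ) → (Fin p → ℝ) → Set ℝ :=
    fun x1 y => {c | ∃ x2, (x1, x2, y) ∈ K2 ∧ c = eval (Sum.elim x1 x2) f2} with hSdef
  have hSabs : ∀ x1 y, ∀ c ∈ S x1 y, ‖c‖ ≤ M := by
    rintro x1 y c ⟨x2, hx2, rfl⟩
    exact hMb (x1, x2, y) hx2
  have hSbdd : ∀ x1 y, BddBelow (S x1 y) := by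
    intro x1 y
    exact ⟨-M, fun c hc => neg_le_of_abs_le (hSabs x1 y c hc)⟩
  -- global bound on v
  have hvb : ∀ x1 y, ‖v x1 y‖ ≤ M := by
    intro x1 y
    rw [hv]
    by_cases hne : (S x1 y).Nonempty
    · rw [Real.norm_eq_abs, abs_le]
      constructor
      · exact le_csInf hne fun c hc => neg_le_of_abs_le (hSabs x1 y c hc)
      · obtain ⟨c, hc⟩ := hne
        exact csInf_le_of_le (hSbdd x1 y) hc (le_of_abs_le (hSabs x1 y c hc))
    · rw [Set.not_nonempty_iff_eq_empty] at hne
      rw [show {c | ∃ x2, (x1, x2, y) ∈ K2 ∧ c = eval (Sum.elim x1 x2) f2} = S x1 y from rfl,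
        hne, Real.sInf_empty]
      simpa using hM0
  -- pointwise inequality on K2
  have hvle : ∀ t ∈ K2, v t.1 t.2.2 ≤ eval (Sum.elim t.1 t.2.1) f2 := by
    intro t ht
    rw [hv]
    exact csInf_le (hSbdd _ _) ⟨t.2.1, ht, rfl⟩
  -- measurability / ae facts
  have mK1 : MeasurableSet K1 := hK1c.isClosed.measurableSet
  have mY : MeasurableSet Y := hYc.isClosed.measurableSet
  have haeμ2 : ∀ᵐ t ∂μ2, t ∈ K2 := by
    rw [ae_iff]; exact hμ2K2
  have haeμ1 : ∀ᵐ x1 ∂μ1, x1 ∈ K1 := by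
    rw [ae_iff]; exact hμ1K1
  have haeφ : ∀ᵐ y ∂φ, y ∈ Y := by
    rw [ae_iff]; exact hφY
  have hφr : φ.restrict Y = φ := Measure.restrict_eq_self_of_ae_mem haeφ
  have hprodnull : (μ1.prod φ) (K1 ×ˢ Y)ᶜ = 0 := by
    have hsub : (K1 ×ˢ Y)ᶜ ⊆ (K1ᶜ ×ˢ (Set.univ : Set (Fin p → ℝ))) ∪
        ((Set.univ : Set (Fin n1 → ℝ)) ×ˢ Yᶜ) := by
      intro z hz
      simp only [Set.mem_compl_iff, Set.mem_prod, Set.mem_union, Set.mem_univ,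
        and_true, true_and, not_and_or] at *
      tauto
    refine measure_mono_null hsub (measure_union_null ?_ ?_)
    · rw [Measure.prod_prod, hμ1K1, zero_mul]
    · rw [Measure.prod_prod, hφY, mul_zero]
  have haeprod : ∀ᵐ z ∂μ1.prod φ, z ∈ K1 ×ˢ Y := by
    rw [ae_iff]
    exact hprodnull
  have hpr : (μ1.prod φ).restrict (K1 ×ˢ Y) = μ1.prod φ :=
    Measure.restrict_eq_self_of_ae_mem haeprod
  -- integrabilities
  have int_v_prod : Integrable (fun z : (Fin n1 → ℝ) × (Fin p → ℝ) => v z.1 z.2) (μ1.prod φ) :=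
    Integrable.mono' (integrable_const M) hvmeas.aestronglyMeasurable
      (Filter.Eventually.of_forall fun z => hvb z.1 z.2)
  have int_v_μ2 : Integrable (fun t : (Fin n1 → ℝ) × (Fin n2 → ℝ) × (Fin p → ℝ) =>
      v t.1 t.2.2) μ2 := by
    refine Integrable.mono' (integrable_const M) ?_
      (Filter.Eventually.of_forall fun t => hvb t.1 t.2.2)
    exact (hvmeas.comp ((measurable_fst.prodMk (measurable_snd.snd)))).aestronglyMeasurable
  have int_f2 : Integrable (fun t : (Fin n1 → ℝ) × (Fin n2 → ℝ) × (Fin p → ℝ) =>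
      eval (Sum.elim t.1 t.2.1) f2) μ2 :=
    Integrable.mono' (integrable_const M) hcont2.aestronglyMeasurable
      (haeμ2.mono fun t ht => hMb t ht)
  -- step 1
  have step1 : (∫ t, v t.1 t.2.2 ∂μ2) ≤ ∫ t, eval (Sum.elim t.1 t.2.1) f2 ∂μ2 :=
    integral_mono_ae int_v_μ2 int_f2 (haeμ2.mono fun t ht => hvle t ht)
  -- step 2 : change of variables
  have hprojm : Measurable fun t : (Fin n1 → ℝ) × (Fin n2 → ℝ) × (Fin p → ℝ) =>
      (t.1, t.2.2) := measurable_fst.prodMk measurable_snd.snd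
  have step2 : (∫ z in K1 ×ˢ Y, v z.1 z.2 ∂(μ1.prod φ)) = ∫ t, v t.1 t.2.2 ∂μ2 := by
    rw [hpr, ← hmap, integral_map hprojm.aemeasurable]
    rw [hmap]
    exact hvmeas.aestronglyMeasurable
  constructor
  · rw [ge_iff_le, step2]; exact step1
  -- second inequality
  have hvSM : StronglyMeasurable (Function.uncurry v) := by
    have : Function.uncurry v = fun z : (Fin n1 → ℝ) × (Fin p → ℝ) => v z.1 z.2 := rfl
    rw [this]; exact hvmeas.stronglyMeasurable
  set G : (Fin n1 → ℝ) → ℝ := fun x1 => ∫ y, v x1 y ∂φ with hGdef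
  have hGmeas : StronglyMeasurable G := hvSM.integral_prod_right
  have hGb : ∀ x1, ‖G x1‖ ≤ M := by
    intro x1
    have := norm_integral_le_of_norm_le_const (μ := φ) (f := fun y => v x1 y) (C := M)
      (Filter.Eventually.of_forall fun y => hvb x1 y)
    simpa using this
  -- bound on f1 over K1
  obtain ⟨C1, hC1⟩ := hK1c.exists_bound_of_continuousOn (continuous_eval f1).continuousOn
  -- ρ is a lower bound for feasible values
  have hρbdd : BddBelow {c | ∃ x1 ∈ K1, c = eval x1 f1 + ∫ y in Y, v x1 y ∂φ} := by
    refine ⟨-C1 - M, ?_⟩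
    rintro c ⟨x1, hx1, rfl⟩
    have h1 : -C1 ≤ eval x1 f1 := neg_le_of_abs_le (hC1 x1 hx1)
    have h2 : -M ≤ ∫ y in Y, v x1 y ∂φ := by
      rw [hφr]
      exact neg_le_of_abs_le (hGb x1)
    linarith
  have hρle : ∀ x1 ∈ K1, ρ ≤ eval x1 f1 + G x1 := by
    intro x1 hx1
    have hmem : eval x1 f1 + G x1 ∈
        {c | ∃ x1 ∈ K1, c = eval x1 f1 + ∫ y in Y, v x1 y ∂φ} := by
      exact ⟨x1, hx1, by rw [hφr]⟩
    rw [hρ]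
    exact csInf_le hρbdd hmem
  -- integrabilities w.r.t. μ1
  have int_f1 : Integrable (fun x1 => eval x1 f1) μ1 :=
    Integrable.mono' (integrable_const C1) (continuous_eval f1).aestronglyMeasurable
      (haeμ1.mono fun x1 hx1 => hC1 x1 hx1)
  have int_G : Integrable G μ1 :=
    Integrable.mono' (integrable_const M) hGmeas.aestronglyMeasurable
      (Filter.Eventually.of_forall hGb)
  have int_sum : Integrable (fun x1 => eval x1 f1 + G x1) μ1 := int_f1.add int_G
  have hfub : (∫ z, v z.1 z.2 ∂(μ1.prod φ)) = ∫ x1, G x1 ∂μ1 :=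
    integral_prod _ int_v_prod
  have hmono : ρ ≤ ∫ x1, (eval x1 f1 + G x1) ∂μ1 := by
    have := integral_mono_ae (integrable_const ρ) int_sum
      (haeμ1.mono fun x1 hx1 => hρle x1 hx1)
    simpa using this
  rw [ge_iff_le, hpr, hfub, ← integral_add int_f1 int_G]
  exact hmono

/-- For every pair `(μ1, μ2)` feasible for the generalized moment problem,
`∫ f1 dμ1 + ∫ f2 dμ2 ≥ ∫ f1 dμ1 + ∫_{K1×Y} v d(μ1 ⊗ φ) ≥ ρ`; consequently `ρ₁₂ ≥ ρ`. -/
theorem gmp_lower_bound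
    (n1 n2 p Nq Nh Ng NgY : ℕ) (hn1 : 0 < n1) (hn2 : 0 < n2) (hp : 0 < p)
    (f1 : MvPolynomial (Fin n1) ℝ) (f2 : MvPolynomial (Fin n1 ⊕ Fin n2) ℝ)
    (q : Fin Nq → MvPolynomial (Fin n1) ℝ)
    (h : Fin Nh → MvPolynomial (Fin n1 ⊕ Fin n2 ⊕ Fin p) ℝ)
    (g : Fin Ng → MvPolynomial (Fin n1 ⊕ Fin n2 ⊕ Fin p) ℝ)
    (gY : Fin NgY → MvPolynomial (Fin p) ℝ)
    (K1 : Set (Fin n1 → ℝ)) (Y : Set (Fin p → ℝ))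
    (K2 : Set ((Fin n1 → ℝ) × (Fin n2 → ℝ) × (Fin p → ℝ)))
    (hK1 : K1 = {x1 | ∀ l, 0 ≤ eval x1 (q l)})
    (hY : Y = {y | ∀ j, 0 ≤ eval y (gY j)})
    (hK2 : K2 = {t | t.1 ∈ K1 ∧ t.2.2 ∈ Y ∧
      (∀ i, eval (Sum.elim t.1 (Sum.elim t.2.1 t.2.2)) (h i) = 0) ∧
      (∀ j, 0 ≤ eval (Sum.elim t.1 (Sum.elim t.2.1 t.2.2)) (g j))})
    (φ : Measure (Fin p → ℝ)) (hφ : IsProbabilityMeasure φ) (hφY : φ Yᶜ = 0)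
    (hK1c : IsCompact K1) (hK2c : IsCompact K2) (hYc : IsCompact Y)
    (hK1ne : K1.Nonempty) (hYne : Y.Nonempty)
    (hfeas : ∀ x1 ∈ K1, ∀ y ∈ Y, ∃ x2, (x1, x2, y) ∈ K2)
    (v : (Fin n1 → ℝ) → (Fin p → ℝ) → ℝ)
    (hv : ∀ x1 y, v x1 y =
      sInf {c | ∃ x2, (x1, x2, y) ∈ K2 ∧ c = eval (Sum.elim x1 x2) f2})
    (hvmeas : Measurable fun t : (Fin n1 → ℝ) × (Fin p → ℝ) => v t.1 t.2)
    (ρ ρ12 : ℝ)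
    (hρ : ρ = sInf {c | ∃ x1 ∈ K1, c = eval x1 f1 + ∫ y in Y, v x1 y ∂φ})
    (hρ12 : ρ12 = sInf {c | ∃ (μ1 : Measure (Fin n1 → ℝ))
        (μ2 : Measure ((Fin n1 → ℝ) × (Fin n2 → ℝ) × (Fin p → ℝ))),
      IsProbabilityMeasure μ1 ∧ IsFiniteMeasure μ2 ∧
      μ1 K1ᶜ = 0 ∧ μ2 K2ᶜ = 0 ∧
      Measure.map (fun t => (t.1, t.2.2)) μ2 = μ1.prod φ ∧
      c = (∫ x1, eval x1 f1 ∂μ1) + ∫ t, eval (Sum.elim t.1 t.2.1) f2 ∂μ2})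
    (μ1 : Measure (Fin n1 → ℝ))
    (μ2 : Measure ((Fin n1 → ℝ) × (Fin n2 → ℝ) × (Fin p → ℝ)))
    (hμ1 : IsProbabilityMeasure μ1) (hμ2 : IsFiniteMeasure μ2)
    (hμ1K1 : μ1 K1ᶜ = 0) (hμ2K2 : μ2 K2ᶜ = 0)
    (hmap : Measure.map (fun t => (t.1, t.2.2)) μ2 = μ1.prod φ) :
    ((∫ x1, eval x1 f1 ∂μ1) + (∫ t, eval (Sum.elim t.1 t.2.1) f2 ∂μ2)
      ≥ (∫ x1, eval x1 f1 ∂μ1) + ∫ t in K1 ×ˢ Y, v t.1 t.2 ∂(μ1.prod φ)) ∧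
    ((∫ x1, eval x1 f1 ∂μ1) + (∫ t in K1 ×ˢ Y, v t.1 t.2 ∂(μ1.prod φ)) ≥ ρ) ∧
    ρ12 ≥ ρ := by
  obtain ⟨h1, h2⟩ := gmp_aux f1 f2 K1 Y K2 φ hφ hφY hK1c hK2c hYc v hv hvmeas ρ hρ
    μ1 μ2 hμ1 hμ2 hμ1K1 hμ2K2 hmap
  refine ⟨by linarith, h2, ?_⟩
  rw [ge_iff_le, hρ12]
  refine le_csInf ⟨_, μ1, μ2, hμ1, hμ2, hμ1K1, hμ2K2, hmap, rfl⟩ ?_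
  rintro c ⟨ν1, ν2, hν1, hν2, hν1K1, hν2K2, hνmap, rfl⟩
  obtain ⟨g1, g2⟩ := gmp_aux f1 f2 K1 Y K2 φ hφ hφY hK1c hK2c hYc v hv hvmeas ρ hρ
    ν1 ν2 hν1 hν2 hν1K1 hν2K2 hνmap
  linarith
end

section
/- Moment characterization of the product-marginal constraint: let μ be a nonnegative finite Borel measure on ℝ^{n1} × ℝ^{n2} × ℝ^p supported in a compact set K2, and let φ be a Borel probability measure on ℝ^p supported in a compact set Y. Then the pushforward of μ under the projection (x1,x2,y) ↦ (x1,y) equals the product of the pushforward of μ under (x1,x2,y) ↦ x1 with φ if and only if for all multi-indices α ∈ ℕ^{n1} and γ ∈ ℕ^{p}, ∫ x1^α y^γ dμ = ( ∫ x1^α dμ ) · ( ∫ y^γ dφ ). -/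
open MeasureTheory MvPolynomial

/-- Two finite Borel measures on `ℝ^a × ℝ^b` supported in a compact set with equal
mixed moments are equal. -/
private lemma aux_ext_of_moments (a b : ℕ) (K : Set ((Fin a → ℝ) × (Fin b → ℝ)))
    (hK : IsCompact K)
    (ν₁ ν₂ : Measure ((Fin a → ℝ) × (Fin b → ℝ)))
    [IsFiniteMeasure ν₁] [IsFiniteMeasure ν₂]
    (hν₁ : ν₁ Kᶜ = 0) (hν₂ : ν₂ Kᶜ = 0)
    (h : ∀ (α : Fin a → ℕ) (γ : Fin b → ℕ),
      (∫ z, (∏ i, z.1 i ^ α i) * ∏ i, z.2 i ^ γ i ∂ν₁)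
        = ∫ z, (∏ i, z.1 i ^ α i) * ∏ i, z.2 i ^ γ i ∂ν₂) : ν₁ = ν₂ := by
  have hKm : MeasurableSet K := hK.isClosed.measurableSet
  haveI : CompactSpace K := isCompact_iff_compactSpace.mp hK
  have em : MeasurableEmbedding (Subtype.val : K → (Fin a → ℝ) × (Fin b → ℝ)) := MeasurableEmbedding.subtype_coe hKm
  set κ₁ : Measure K := ν₁.comap Subtype.val with hκ₁
  set κ₂ : Measure K := ν₂.comap Subtype.val with hκ₂
  have hmap₁ : Measure.map Subtype.val κ₁ = ν₁ := by
    rw [hκ₁, map_comap_subtype_coe hKm]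
    refine Measure.restrict_eq_self_of_ae_mem ?_
    rw [Filter.eventually_iff, mem_ae_iff]
    simpa using hν₁
  have hmap₂ : Measure.map Subtype.val κ₂ = ν₂ := by
    rw [hκ₂, map_comap_subtype_coe hKm]
    refine Measure.restrict_eq_self_of_ae_mem ?_
    rw [Filter.eventually_iff, mem_ae_iff]
    simpa using hν₂
  haveI : IsFiniteMeasure κ₁ := by rw [hκ₁]; infer_instance
  haveI : IsFiniteMeasure κ₂ := by rw [hκ₂]; infer_instance
  have bridge₁ : ∀ g : ((Fin a → ℝ) × (Fin b → ℝ)) → ℝ, ∫ z, g z ∂ν₁ = ∫ x : K, g ↑x ∂κ₁ := by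
    intro g; rw [← hmap₁, em.integral_map]
  have bridge₂ : ∀ g : ((Fin a → ℝ) × (Fin b → ℝ)) → ℝ, ∫ z, g z ∂ν₂ = ∫ x : K, g ↑x ∂κ₂ := by
    intro g; rw [← hmap₂, em.integral_map]
  -- coordinate functions on K
  let F : (Fin a ⊕ Fin b) → C(K, ℝ) := fun k =>
    Sum.elim (fun i => ⟨fun x => (x : (Fin a → ℝ) × (Fin b → ℝ)).1 i, by fun_prop⟩)
      (fun j => ⟨fun x => (x : (Fin a → ℝ) × (Fin b → ℝ)).2 j, by fun_prop⟩) k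
  set A : Subalgebra ℝ C(K, ℝ) := Algebra.adjoin ℝ (Set.range F) with hA
  have hsep : A.SeparatesPoints := by
    intro x y hxy
    have hxy' : (x : (Fin a → ℝ) × (Fin b → ℝ)) ≠ (y : (Fin a → ℝ) × (Fin b → ℝ)) := fun h' => hxy (Subtype.ext h')
    have : (x : (Fin a → ℝ) × (Fin b → ℝ)).1 ≠ (y : (Fin a → ℝ) × (Fin b → ℝ)).1 ∨ (x : (Fin a → ℝ) × (Fin b → ℝ)).2 ≠ (y : (Fin a → ℝ) × (Fin b → ℝ)).2 := by
      by_contra hc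
      push_neg at hc
      exact hxy' (Prod.ext hc.1 hc.2)
    rcases this with h1 | h2
    · obtain ⟨i, hi⟩ := Function.ne_iff.mp h1
      exact ⟨F (Sum.inl i), ⟨F (Sum.inl i),
        Algebra.subset_adjoin ⟨Sum.inl i, rfl⟩, rfl⟩, hi⟩
    · obtain ⟨j, hj⟩ := Function.ne_iff.mp h2
      exact ⟨F (Sum.inr j), ⟨F (Sum.inr j),
        Algebra.subset_adjoin ⟨Sum.inr j, rfl⟩, rfl⟩, hj⟩
  have htop := ContinuousMap.subalgebra_topologicalClosure_eq_top_of_separatesPoints A hsep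
  have hdense : Dense (A : Set C(K, ℝ)) := by
    rw [dense_iff_closure_eq]
    have := congrArg (fun S : Subalgebra ℝ C(K, ℝ) => (S : Set C(K, ℝ))) htop
    simpa [Subalgebra.topologicalClosure] using this
  -- integrability of continuous functions on K
  have hint : ∀ (κ : Measure K) [IsFiniteMeasure κ] (f : C(K, ℝ)), Integrable f κ := by
    intro κ _ f
    exact (BoundedContinuousFunction.mkOfCompact f).integrable κ
  -- continuity of the integration functional
  have hLcont : ∀ (κ : Measure K) [IsFiniteMeasure κ],
      Continuous fun f : C(K, ℝ) => ∫ x, f x ∂κ := by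
    intro κ _
    refine (LipschitzWith.of_dist_le_mul (K := (κ Set.univ).toNNReal) ?_).continuous
    intro f g
    have hsub : ∫ x, f x ∂κ - ∫ x, g x ∂κ = ∫ x, (f - g : C(K, ℝ)) x ∂κ := by
      rw [← integral_sub (hint κ f) (hint κ g)]
      simp
    rw [Real.dist_eq, hsub]
    have hb := (BoundedContinuousFunction.mkOfCompact (f - g)).norm_integral_le_mul_norm κ
    simp only [BoundedContinuousFunction.norm_mkOfCompact, BoundedContinuousFunction.mkOfCompact_apply]
      at hb
    calc |∫ x, (f - g : C(K, ℝ)) x ∂κ| ≤ (κ Set.univ).toReal * ‖f - g‖ := hb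
      _ = ↑(κ Set.univ).toNNReal * dist f g := by rw [dist_eq_norm]; rfl
  -- the two functionals agree on A
  have hAeq : ∀ f ∈ A, ∫ x, f x ∂κ₁ = ∫ x, f x ∂κ₂ := by
    have key : ∀ P : MvPolynomial (Fin a ⊕ Fin b) ℝ,
        ∫ x, (aeval F P : C(K, ℝ)) x ∂κ₁ = ∫ x, (aeval F P : C(K, ℝ)) x ∂κ₂ := by
      intro P
      induction P using MvPolynomial.induction_on' with
      | monomial d c =>
        have hval : ∀ x : K, (aeval F (monomial d c) : C(K, ℝ)) x
            = c * ((∏ i, (x : (Fin a → ℝ) × (Fin b → ℝ)).1 i ^ d (Sum.inl i)) * ∏ j, (x : (Fin a → ℝ) × (Fin b → ℝ)).2 j ^ d (Sum.inr j)) := by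
          intro x
          have hx : (aeval F (monomial d c) : C(K, ℝ)) x
              = aeval (fun k => F k x) (monomial d c) := by
            have := congrArg (fun φ => φ (monomial d c))
              (MvPolynomial.comp_aeval (φ := ContinuousMap.evalAlgHom ℝ ℝ x) (f := F))
            simpa using this
          rw [hx, aeval_monomial]
          simp only [Algebra.algebraMap_self, RingHom.id_apply]
          rw [Finsupp.prod_pow, Fintype.prod_sum_type]
          simp only [F, Sum.elim_inl, Sum.elim_inr, ContinuousMap.coe_mk]
          try ring
        have hmoment := h (fun i => d (Sum.inl i)) (fun j => d (Sum.inr j))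
        rw [bridge₁, bridge₂] at hmoment
        simp_rw [hval]
        rw [integral_const_mul, integral_const_mul, hmoment]
      | add p q hp hq =>
        simp only [map_add, ContinuousMap.add_apply]
        rw [integral_add (hint κ₁ _) (hint κ₁ _), integral_add (hint κ₂ _) (hint κ₂ _),
          hp, hq]
    intro f hf
    rw [hA, Algebra.adjoin_range_eq_range_aeval] at hf
    obtain ⟨P, rfl⟩ := hf
    exact key P
  -- hence on all of C(K, ℝ)
  have hCeq : ∀ f : C(K, ℝ), ∫ x, f x ∂κ₁ = ∫ x, f x ∂κ₂ := by
    have := Continuous.ext_on hdense (hLcont κ₁) (hLcont κ₂) (fun f hf => hAeq f hf)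
    exact fun f => congrFun this f
  -- hence equal integrals of bounded continuous functions on E
  have hbcf : ∀ g : BoundedContinuousFunction ((Fin a → ℝ) × (Fin b → ℝ)) ℝ, ∫ z, g z ∂ν₁ = ∫ z, g z ∂ν₂ := by
    intro g
    rw [bridge₁, bridge₂]
    exact hCeq (g.toContinuousMap.comp ⟨Subtype.val, continuous_subtype_val⟩)
  -- conclude via the lintegral characterization
  refine ext_of_forall_lintegral_eq_of_IsFiniteMeasure fun f => ?_
  have hlip : LipschitzWith 1 ((↑) : NNReal → ℝ) := isometry_subtype_coe.lipschitz
  set g : BoundedContinuousFunction ((Fin a → ℝ) × (Fin b → ℝ)) ℝ := f.comp _ hlip with hg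
  have hgx : ∀ z : (Fin a → ℝ) × (Fin b → ℝ), g z = (f z : ℝ) := fun z => rfl
  have h₁ : ∫⁻ z, f z ∂ν₁ = ENNReal.ofReal (∫ z, (f z : ℝ) ∂ν₁) := by
    rw [lintegral_coe_eq_integral]
    exact g.integrable ν₁
  have h₂ : ∫⁻ z, f z ∂ν₂ = ENNReal.ofReal (∫ z, (f z : ℝ) ∂ν₂) := by
    rw [lintegral_coe_eq_integral]
    exact g.integrable ν₂
  rw [h₁, h₂]
  exact congrArg ENNReal.ofReal (hbcf g)

/-- For a finite nonnegative Borel measure `μ` supported in a compact set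
`K2` and a Borel probability measure `φ` supported in a compact set `Y`, the
product-marginal constraint `π_{x1,y} μ = (π_{x1} μ) ⊗ φ` holds if and only if
`∫ x1^α y^γ dμ = (∫ x1^α dμ) (∫ y^γ dφ)` for all multi-indices `α`, `γ`. -/
theorem product_marginal_iff_moments
    (n1 n2 p : ℕ) (hn1 : 0 < n1) (hn2 : 0 < n2) (hp : 0 < p)
    (K2 : Set ((Fin n1 → ℝ) × (Fin n2 → ℝ) × (Fin p → ℝ))) (hK2c : IsCompact K2)
    (Y : Set (Fin p → ℝ)) (hYc : IsCompact Y)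
    (μ : Measure ((Fin n1 → ℝ) × (Fin n2 → ℝ) × (Fin p → ℝ)))
    (hμfin : IsFiniteMeasure μ) (hμK2 : μ K2ᶜ = 0)
    (φ : Measure (Fin p → ℝ)) (hφ : IsProbabilityMeasure φ) (hφY : φ Yᶜ = 0) :
    Measure.map (fun t => (t.1, t.2.2)) μ = (Measure.map (fun t => t.1) μ).prod φ ↔
      ∀ (α : Fin n1 → ℕ) (γ : Fin p → ℕ),
        (∫ t, (∏ i, t.1 i ^ α i) * ∏ i, t.2.2 i ^ γ i ∂μ)
          = (∫ t, ∏ i, t.1 i ^ α i ∂μ) * ∫ y, ∏ i, y i ^ γ i ∂φ := by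
  set g : (Fin n1 → ℝ) × (Fin n2 → ℝ) × (Fin p → ℝ) → (Fin n1 → ℝ) × (Fin p → ℝ) := fun t => (t.1, t.2.2) with hgdef
  have hgc : Continuous g := by fun_prop
  have hgm : Measurable g := hgc.measurable
  have hfstm : Measurable (fun t : (Fin n1 → ℝ) × (Fin n2 → ℝ) × (Fin p → ℝ) => t.1) := measurable_fst
  haveI : IsFiniteMeasure (Measure.map (fun t : (Fin n1 → ℝ) × (Fin n2 → ℝ) × (Fin p → ℝ) => t.1) μ) :=
    Measure.isFiniteMeasure_map μ _
  haveI : IsFiniteMeasure (Measure.map g μ) := Measure.isFiniteMeasure_map μ _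
  have hcont : ∀ (α : Fin n1 → ℕ) (γ : Fin p → ℕ),
      Continuous fun z : (Fin n1 → ℝ) × (Fin p → ℝ) => (∏ i, z.1 i ^ α i) * ∏ i, z.2 i ^ γ i := by
    intro α γ; fun_prop
  have hcont1 : ∀ (α : Fin n1 → ℕ), Continuous fun x : Fin n1 → ℝ => ∏ i, x i ^ α i := by
    intro α; fun_prop
  -- the moments of μ via the pushforwards
  have hmomμ : ∀ (α : Fin n1 → ℕ) (γ : Fin p → ℕ),
      (∫ t, (∏ i, t.1 i ^ α i) * ∏ i, t.2.2 i ^ γ i ∂μ)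
        = ∫ z, (∏ i, z.1 i ^ α i) * ∏ i, z.2 i ^ γ i ∂(Measure.map g μ) := by
    intro α γ
    rw [integral_map hgm.aemeasurable ((hcont α γ).aestronglyMeasurable)]
  have hmomfst : ∀ (α : Fin n1 → ℕ),
      (∫ t, ∏ i, t.1 i ^ α i ∂μ)
        = ∫ x, ∏ i, x i ^ α i ∂(Measure.map (fun t : (Fin n1 → ℝ) × (Fin n2 → ℝ) × (Fin p → ℝ) => t.1) μ) := by
    intro α
    rw [integral_map hfstm.aemeasurable ((hcont1 α).aestronglyMeasurable)]
  have hmomprod : ∀ (α : Fin n1 → ℕ) (γ : Fin p → ℕ),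
      (∫ z, (∏ i, z.1 i ^ α i) * ∏ i, z.2 i ^ γ i
          ∂((Measure.map (fun t : (Fin n1 → ℝ) × (Fin n2 → ℝ) × (Fin p → ℝ) => t.1) μ).prod φ))
        = (∫ t, ∏ i, t.1 i ^ α i ∂μ) * ∫ y, ∏ i, y i ^ γ i ∂φ := by
    intro α γ
    rw [integral_prod_mul (fun x : Fin n1 → ℝ => ∏ i, x i ^ α i)
      (fun y : Fin p → ℝ => ∏ i, y i ^ γ i), hmomfst]
  constructor
  · intro hEq α γ
    rw [hmomμ, hEq, hmomprod]
  · intro h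
    -- compact supports for both pushforwards
    set K : Set ((Fin n1 → ℝ) × (Fin p → ℝ)) := (g '' K2) ∪ ((Prod.fst '' K2) ×ˢ Y) with hKdef
    have hKc : IsCompact K :=
      (hK2c.image hgc).union ((hK2c.image continuous_fst).prod hYc)
    have himg_m : MeasurableSet (g '' K2) := (hK2c.image hgc).isClosed.measurableSet
    have himg1_m : MeasurableSet (Prod.fst '' K2) :=
      (hK2c.image continuous_fst).isClosed.measurableSet
    have h1 : Measure.map g μ Kᶜ = 0 := by
      refine measure_mono_null (Set.compl_subset_compl.mpr Set.subset_union_left) ?_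
      rw [Measure.map_apply hgm himg_m.compl]
      refine measure_mono_null ?_ hμK2
      intro t ht
      simp only [Set.mem_preimage, Set.mem_compl_iff] at ht ⊢
      exact fun htK2 => ht ⟨t, htK2, rfl⟩
    have hfst0 : Measure.map (fun t : (Fin n1 → ℝ) × (Fin n2 → ℝ) × (Fin p → ℝ) => t.1) μ (Prod.fst '' K2)ᶜ = 0 := by
      rw [Measure.map_apply hfstm himg1_m.compl]
      refine measure_mono_null ?_ hμK2
      intro t ht
      simp only [Set.mem_preimage, Set.mem_compl_iff] at ht ⊢
      exact fun htK2 => ht ⟨t, htK2, rfl⟩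
    have h2 : (Measure.map (fun t : (Fin n1 → ℝ) × (Fin n2 → ℝ) × (Fin p → ℝ) => t.1) μ).prod φ Kᶜ = 0 := by
      refine measure_mono_null (Set.compl_subset_compl.mpr Set.subset_union_right) ?_
      rw [Set.compl_prod_eq_union]
      refine le_antisymm (le_trans (measure_union_le _ _) ?_) (by simp)
      rw [Measure.prod_prod, Measure.prod_prod, hfst0, hφY]
      simp
    have hmom : ∀ (α : Fin n1 → ℕ) (γ : Fin p → ℕ),
        (∫ z, (∏ i, z.1 i ^ α i) * ∏ i, z.2 i ^ γ i ∂(Measure.map g μ))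
          = ∫ z, (∏ i, z.1 i ^ α i) * ∏ i, z.2 i ^ γ i
              ∂((Measure.map (fun t : (Fin n1 → ℝ) × (Fin n2 → ℝ) × (Fin p → ℝ) => t.1) μ).prod φ) := by
      intro α γ
      rw [← hmomμ, hmomprod, h]
    exact aux_ext_of_moments n1 p K hKc _ _ h1 h2 hmom
end
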